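/- arXiv:1511.02922 — 3 statements merged into one kernel-verified Lean document; each statement's English description precedes it below -/
import Mathlib

section
/- Let s > 2 and suppose coefficients a_j satisfy |a_j| ≤ c ‖j‖₂^{-s} for all j ∈ ℕ² and the Gram values satisfy |G(j,l)| ≤ γ (1 + ‖j-l‖₂)^{-s}. Then for every n₁ ∈ ℕ, ∑_{j₁ > n₁, j₂ ∈ ℕ} ∑_{l₁ > n₁, l₂ ∈ ℕ} |a_j| |a_l| |G(j,l)| ≤ C n₁^{-(s-1)} for a constant C depending only on c, γ, s. -/
set_option maxHeartbeats 1600000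
open Filter Finset


lemma auxP_summable {p : ℝ} (hp : 1 < p) : Summable (fun k : ℕ => (k : ℝ) ^ (-p)) :=
  Real.summable_nat_rpow.2 (by linarith)

lemma auxP_nonneg (p : ℝ) (k : ℕ) : 0 ≤ (k : ℝ) ^ (-p) := Real.rpow_nonneg (Nat.cast_nonneg k) _

lemma aux_shift_summable {p : ℝ} (hp : 1 < p) (k : ℕ) :
    Summable (fun m : ℕ => ((m + k : ℕ) : ℝ) ^ (-p)) :=
  (summable_nat_add_iff k).2 (auxP_summable hp)

lemma aux_shift_le {p : ℝ} (hp : 1 < p) (k : ℕ) :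
    ∑' m : ℕ, ((m + k : ℕ) : ℝ) ^ (-p) ≤ ∑' m : ℕ, (m : ℝ) ^ (-p) := by
  have h := Summable.sum_add_tsum_nat_add (f := fun k : ℕ => (k : ℝ) ^ (-p)) k (auxP_summable hp)
  have h2 : 0 ≤ ∑ i ∈ Finset.range k, ((i : ℝ)) ^ (-p) :=
    Finset.sum_nonneg fun i _ => auxP_nonneg p i
  push_cast at h ⊢
  linarith

lemma aux_dist_summable {p : ℝ} (hp : 1 < p) (j : ℕ) :
    Summable (fun l : ℕ => ((1 + Nat.dist j l : ℕ) : ℝ) ^ (-p)) := by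
  apply (summable_nat_add_iff (j + 1)).1
  have hd : ∀ m : ℕ, 1 + Nat.dist j (m + (j + 1)) = m + 2 := by
    intro m; simp [Nat.dist]; omega
  simp only [hd]
  exact aux_shift_summable hp 2

lemma aux_dist_tsum_le {p : ℝ} (hp : 1 < p) (j : ℕ) :
    ∑' l : ℕ, ((1 + Nat.dist j l : ℕ) : ℝ) ^ (-p) ≤ 2 * ∑' m : ℕ, (m : ℝ) ^ (-p) := by
  have hH := aux_dist_summable hp j
  rw [← Summable.sum_add_tsum_nat_add (j + 1) hH]
  have hd : ∀ m : ℕ, 1 + Nat.dist j (m + (j + 1)) = m + 2 := by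
    intro m; simp [Nat.dist]; omega
  have h2 : ∑' m : ℕ, ((1 + Nat.dist j (m + (j + 1)) : ℕ) : ℝ) ^ (-p)
      ≤ ∑' m : ℕ, (m : ℝ) ^ (-p) := by
    simp only [hd]
    exact aux_shift_le hp 2
  have h1 : ∑ l ∈ Finset.range (j + 1), ((1 + Nat.dist j l : ℕ) : ℝ) ^ (-p)
      ≤ ∑' m : ℕ, (m : ℝ) ^ (-p) := by
    have he : ∀ l ∈ Finset.range (j + 1),
        ((1 + Nat.dist j l : ℕ) : ℝ) ^ (-p) = (((j + 1 - l : ℕ) : ℝ)) ^ (-p) := by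
      intro l hl
      rw [Finset.mem_range] at hl
      congr 2
      have : Nat.dist j l = j - l := Nat.dist_eq_sub_of_le_right (by omega)
      omega
    rw [Finset.sum_congr rfl he]
    have hr := Finset.sum_range_reflect (fun i : ℕ => (((i + 1 : ℕ) : ℝ)) ^ (-p)) (j + 1)
    have he2 : ∀ l ∈ Finset.range (j + 1),
        (((j + 1 - l : ℕ) : ℝ)) ^ (-p) = (((j + 1 - 1 - l + 1 : ℕ) : ℝ)) ^ (-p) := by
      intro l hl; rw [Finset.mem_range] at hl; congr 2; omega
    rw [Finset.sum_congr rfl he2, hr]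
    calc ∑ l ∈ Finset.range (j + 1), (((l + 1 : ℕ) : ℝ)) ^ (-p)
        ≤ ∑' l : ℕ, (((l + 1 : ℕ) : ℝ)) ^ (-p) :=
          Summable.sum_le_tsum _ (fun i _ => auxP_nonneg p _) (aux_shift_summable hp 1)
      _ ≤ ∑' m : ℕ, (m : ℝ) ^ (-p) := aux_shift_le hp 1
  linarith

lemma aux_inv_sq_tail (n : ℕ) (hn : 1 ≤ n) :
    ∑' m : ℕ, ((m + n + 1 : ℕ) : ℝ) ^ (-(2 : ℝ)) ≤ 1 / n := by
  set f : ℕ → ℝ := fun m => ((m : ℝ) + n)⁻¹ with hf_def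
  have hn' : (0:ℝ) < n := by exact_mod_cast hn
  have hfpos : ∀ m : ℕ, (0:ℝ) < (m : ℝ) + n := fun m => by positivity
  have htel : HasSum (fun m : ℕ => f m - f (m + 1)) ((n : ℝ))⁻¹ := by
    rw [hasSum_iff_tendsto_nat_of_nonneg]
    · have hps : ∀ N : ℕ, ∑ m ∈ Finset.range N, (f m - f (m + 1)) = f 0 - f N :=
        fun N => Finset.sum_range_sub' f N
      simp only [hps]
      have h0 : Tendsto (fun N : ℕ => f N) atTop (nhds 0) := by
        have := (tendsto_one_div_atTop_nhds_zero_nat (𝕜 := ℝ)).comp (tendsto_add_atTop_nat n)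
        simpa [hf_def, Function.comp_def, one_div] using this
      have hcon : Tendsto (fun _ : ℕ => f 0) atTop (nhds (f 0)) := tendsto_const_nhds
      have := hcon.sub h0
      simp only [sub_zero] at this
      have hf0 : f 0 = ((n:ℝ))⁻¹ := by simp [hf_def]
      rw [hf0]
      convert this using 2 <;> rw [hf0]
    · intro m
      have h1 : (m : ℝ) + n ≤ ((m + 1 : ℕ) : ℝ) + n := by push_cast; linarith
      have := one_div_le_one_div_of_le (hfpos m) h1
      simp only [hf_def, one_div] at this ⊢
      push_cast at this ⊢
      linarith
  have hsum2 : Summable (fun m : ℕ => ((m + n + 1 : ℕ) : ℝ) ^ (-(2 : ℝ))) :=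
    (summable_nat_add_iff (n + 1)).2 (Real.summable_nat_rpow.2 (by norm_num))
  have hle : ∀ m : ℕ, ((m + n + 1 : ℕ) : ℝ) ^ (-(2 : ℝ)) ≤ f m - f (m + 1) := by
    intro m
    have hx : (0:ℝ) < (m : ℝ) + n := hfpos m
    have hx1 : (0:ℝ) < (m : ℝ) + n + 1 := by linarith
    have hc : ((m + n + 1 : ℕ) : ℝ) = (m : ℝ) + n + 1 := by push_cast; ring
    rw [hc]
    have hrw : ((m : ℝ) + n + 1) ^ (-(2 : ℝ)) = (((m : ℝ) + n + 1) ^ (2:ℕ))⁻¹ := by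
      rw [Real.rpow_neg hx1.le, ← Real.rpow_natCast ((m : ℝ) + n + 1) 2]
      norm_num
    rw [hrw]
    have hne1 : (m : ℝ) + n ≠ 0 := ne_of_gt hx
    have hne2 : (m : ℝ) + n + 1 ≠ 0 := ne_of_gt hx1
    have hfm : f m - f (m + 1) = (((m : ℝ) + n) * ((m : ℝ) + n + 1))⁻¹ := by
      simp only [hf_def]
      push_cast
      field_simp
      try ring
      try tauto
    rw [hfm]
    apply inv_anti₀ (by positivity)
    nlinarith
  calc ∑' m : ℕ, ((m + n + 1 : ℕ) : ℝ) ^ (-(2 : ℝ))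
      ≤ ∑' m : ℕ, (f m - f (m + 1)) := Summable.tsum_le_tsum hle hsum2 htel.summable
    _ = ((n:ℝ))⁻¹ := htel.tsum_eq
    _ = 1 / n := (one_div _).symm

lemma aux_tail_rpow {s : ℝ} (hs : 2 < s) (n : ℕ) (hn : 1 ≤ n) :
    ∑' m : ℕ, ((m + n + 1 : ℕ) : ℝ) ^ (-s) ≤ (n : ℝ) ^ (-(s - 1)) := by
  have hn' : (0:ℝ) < n := by exact_mod_cast hn
  have hb : ∀ m : ℕ, (0:ℝ) < ((m + n + 1 : ℕ) : ℝ) := by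
    intro m; push_cast; positivity
  have hle : ∀ m : ℕ, ((m + n + 1 : ℕ) : ℝ) ^ (-s)
      ≤ (n : ℝ) ^ (-(s - 2)) * ((m + n + 1 : ℕ) : ℝ) ^ (-(2:ℝ)) := by
    intro m
    have h1 : ((m + n + 1 : ℕ) : ℝ) ^ (-s)
        = ((m + n + 1 : ℕ) : ℝ) ^ (-(s - 2)) * ((m + n + 1 : ℕ) : ℝ) ^ (-(2:ℝ)) := by
      rw [← Real.rpow_add (hb m)]; ring_nf
    rw [h1]
    have h2 : ((m + n + 1 : ℕ) : ℝ) ^ (-(s - 2)) ≤ (n : ℝ) ^ (-(s - 2)) :=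
      Real.rpow_le_rpow_of_nonpos hn' (by push_cast; linarith) (by linarith)
    exact mul_le_mul_of_nonneg_right h2 (Real.rpow_nonneg (hb m).le _)
  have hsum2 : Summable (fun m : ℕ => ((m + n + 1 : ℕ) : ℝ) ^ (-(2 : ℝ))) :=
    (summable_nat_add_iff (n + 1)).2 (Real.summable_nat_rpow.2 (by norm_num))
  have hsumL : Summable (fun m : ℕ => ((m + n + 1 : ℕ) : ℝ) ^ (-s)) :=
    (summable_nat_add_iff (n + 1)).2 (Real.summable_nat_rpow.2 (by linarith))
  calc ∑' m : ℕ, ((m + n + 1 : ℕ) : ℝ) ^ (-s)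
      ≤ ∑' m : ℕ, (n : ℝ) ^ (-(s - 2)) * ((m + n + 1 : ℕ) : ℝ) ^ (-(2:ℝ)) :=
        Summable.tsum_le_tsum hle hsumL (hsum2.mul_left _)
    _ = (n : ℝ) ^ (-(s - 2)) * ∑' m : ℕ, ((m + n + 1 : ℕ) : ℝ) ^ (-(2:ℝ)) :=
        hsum2.tsum_mul_left _
    _ ≤ (n : ℝ) ^ (-(s - 2)) * (1 / n) := by
        have := aux_inv_sq_tail n hn
        exact mul_le_mul_of_nonneg_left this (Real.rpow_nonneg hn'.le _)
    _ = (n : ℝ) ^ (-(s - 1)) := by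
        rw [one_div, ← Real.rpow_neg_one (n : ℝ), ← Real.rpow_add hn']
        ring_nf

lemma aux_three {p x y z : ℝ} (hp : 0 < p) (hx : 1 ≤ x) (hy : 1 ≤ y) (hz : 1 ≤ z)
    (hxyz : x ≤ y + z) :
    y ^ (-p) * z ^ (-p) ≤ 2 ^ p * (x ^ (-p) * (y ^ (-p) + z ^ (-p))) := by
  have h2p : (0:ℝ) < 2 ^ p := Real.rpow_pos_of_pos two_pos p
  have hxp : (0:ℝ) ≤ x ^ (-p) := Real.rpow_nonneg (by linarith) _
  have hyp : (0:ℝ) ≤ y ^ (-p) := Real.rpow_nonneg (by linarith) _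
  have hzp : (0:ℝ) ≤ z ^ (-p) := Real.rpow_nonneg (by linarith) _
  have key : ∀ u v : ℝ, 1 ≤ u → 1 ≤ v → u ≤ v → x ≤ u + v →
      u ^ (-p) * v ^ (-p) ≤ 2 ^ p * (x ^ (-p) * (u ^ (-p) + v ^ (-p))) := by
    intro u v hu hv huv hxuv
    have hup : (0:ℝ) ≤ u ^ (-p) := Real.rpow_nonneg (by linarith) _
    have hvp : (0:ℝ) ≤ v ^ (-p) := Real.rpow_nonneg (by linarith) _
    have h1 : (2 * v) ^ (-p) ≤ x ^ (-p) :=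
      Real.rpow_le_rpow_of_nonpos (by linarith) (by linarith) (by linarith)
    have h2 : ((2:ℝ) * v) ^ (-p) = 2 ^ (-p) * v ^ (-p) :=
      Real.mul_rpow (by norm_num) (by linarith)
    have h4 : (2:ℝ) ^ (-p) = (2 ^ p)⁻¹ := Real.rpow_neg (by norm_num) p
    have hv2 : v ^ (-p) ≤ 2 ^ p * x ^ (-p) := by
      have := mul_le_mul_of_nonneg_left h1 h2p.le
      rw [h2, h4] at this
      calc v ^ (-p) = 2 ^ p * ((2 ^ p)⁻¹ * v ^ (-p)) := by field_simp
        _ ≤ 2 ^ p * x ^ (-p) := this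
    calc u ^ (-p) * v ^ (-p) ≤ u ^ (-p) * (2 ^ p * x ^ (-p)) :=
          mul_le_mul_of_nonneg_left hv2 hup
      _ ≤ 2 ^ p * (x ^ (-p) * (u ^ (-p) + v ^ (-p))) := by nlinarith
  rcases le_total y z with h | h
  · exact key y z hy hz h hxyz
  · have := key z y hz hy h (by linarith)
    calc y ^ (-p) * z ^ (-p) = z ^ (-p) * y ^ (-p) := by ring
      _ ≤ 2 ^ p * (x ^ (-p) * (z ^ (-p) + y ^ (-p))) := this
      _ = 2 ^ p * (x ^ (-p) * (y ^ (-p) + z ^ (-p))) := by ring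

noncomputable def nrm (j : ℕ × ℕ) : ℝ := Real.sqrt ((j.1 : ℝ)^2 + (j.2 : ℝ)^2)

noncomputable def dst (j l : ℕ × ℕ) : ℝ :=
  Real.sqrt (((j.1 : ℝ) - l.1)^2 + ((j.2 : ℝ) - l.2)^2)

lemma aux_nrm {s : ℝ} (hs : 0 < s) (u v : ℕ) (hu : 1 ≤ u) (hv : 1 ≤ v) :
    nrm (u, v) ^ (-s) ≤ (u:ℝ) ^ (-(s/2)) * (v:ℝ) ^ (-(s/2)) := by
  have hu' : (1:ℝ) ≤ u := by exact_mod_cast hu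
  have hv' : (1:ℝ) ≤ v := by exact_mod_cast hv
  have huv : (0:ℝ) < (u:ℝ) * v := by nlinarith
  have hsq : Real.sqrt ((u:ℝ) * v) ≤ nrm (u, v) := by
    apply Real.sqrt_le_sqrt
    simp only [nrm]
    nlinarith
  have hsqpos : (0:ℝ) < Real.sqrt ((u:ℝ) * v) := Real.sqrt_pos.2 huv
  have h1 : nrm (u, v) ^ (-s) ≤ (Real.sqrt ((u:ℝ) * v)) ^ (-s) :=
    Real.rpow_le_rpow_of_nonpos hsqpos hsq (by linarith)
  have h2 : (Real.sqrt ((u:ℝ) * v)) ^ (-s) = ((u:ℝ) * v) ^ (-(s/2)) := by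
    rw [Real.sqrt_eq_rpow, ← Real.rpow_mul huv.le]
    congr 1
    ring
  have h3 : ((u:ℝ) * v) ^ (-(s/2)) = (u:ℝ) ^ (-(s/2)) * (v:ℝ) ^ (-(s/2)) :=
    Real.mul_rpow (by linarith) (by linarith)
  rw [h2, h3] at h1
  exact h1

lemma aux_dst {s p : ℝ} (hp : 0 < p) (hps : p ≤ s) (j l : ℕ × ℕ) :
    (1 + dst j l) ^ (-s) ≤ ((1 + Nat.dist j.1 l.1 : ℕ) : ℝ) ^ (-p) := by
  have hd1 : |(j.1 : ℝ) - l.1| ≤ dst j l := by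
    simp only [dst]
    rw [← Real.sqrt_sq_eq_abs]
    apply Real.sqrt_le_sqrt
    nlinarith [sq_nonneg ((j.2 : ℝ) - l.2)]
  have hcast : ((Nat.dist j.1 l.1 : ℕ) : ℝ) = |(j.1 : ℝ) - l.1| := by
    rcases le_total j.1 l.1 with h | h
    · rw [Nat.dist_eq_sub_of_le h]
      rw [Nat.cast_sub h]
      have hr : (j.1 : ℝ) ≤ (l.1 : ℝ) := by exact_mod_cast h
      rw [abs_of_nonpos (by linarith)]
      ring
    · rw [Nat.dist_eq_sub_of_le_right h]
      rw [Nat.cast_sub h]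
      have hr : (l.1 : ℝ) ≤ (j.1 : ℝ) := by exact_mod_cast h
      rw [abs_of_nonneg (by linarith)]
  have hD1 : (1:ℝ) ≤ ((1 + Nat.dist j.1 l.1 : ℕ) : ℝ) := by
    have h1 : (1:ℕ) ≤ 1 + Nat.dist j.1 l.1 := by omega
    exact_mod_cast h1
  have hle : ((1 + Nat.dist j.1 l.1 : ℕ) : ℝ) ≤ 1 + dst j l := by
    push_cast
    push_cast at hcast
    rw [hcast]
    linarith
  calc (1 + dst j l) ^ (-s) ≤ ((1 + Nat.dist j.1 l.1 : ℕ) : ℝ) ^ (-s) :=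
        Real.rpow_le_rpow_of_nonpos (by linarith) hle (by linarith)
    _ ≤ ((1 + Nat.dist j.1 l.1 : ℕ) : ℝ) ^ (-p) :=
        Real.rpow_le_rpow_of_exponent_le hD1 (by linarith)

lemma aux_nat_dist_shift (a b k : ℕ) : Nat.dist (a + k) (b + k) = Nat.dist a b := by
  simp [Nat.dist]; omega

theorem stmt7 (s c γ : ℝ) (hs : 2 < s) (hc : 0 < c) (hγ : 0 < γ)
    (a : ℕ × ℕ → ℂ) (G : ℕ × ℕ → ℕ × ℕ → ℂ)
    (ha : ∀ j : ℕ × ℕ, 1 ≤ j.1 → 1 ≤ j.2 → ‖a j‖ ≤ c * nrm j ^ (-s))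
    (hG : ∀ j l : ℕ × ℕ, 1 ≤ j.1 → 1 ≤ j.2 → 1 ≤ l.1 → 1 ≤ l.2 →
      ‖G j l‖ ≤ γ * (1 + dst j l) ^ (-s)) :
    ∃ C : ℝ, 0 < C ∧ ∀ n₁ : ℕ, 1 ≤ n₁ →
      ∑' j : {p : ℕ × ℕ // n₁ < p.1 ∧ 1 ≤ p.2},
        ∑' l : {p : ℕ × ℕ // n₁ < p.1 ∧ 1 ≤ p.2},
          ‖a j.1‖ * ‖a l.1‖ * ‖G j.1 l.1‖ ≤ C * (n₁ : ℝ) ^ (-(s - 1)) := by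
  have hp1 : 1 < s / 2 := by linarith
  have hp0 : 0 < s / 2 := by linarith
  set p : ℝ := s / 2 with hp_def
  set Z : ℝ := ∑' m : ℕ, (m : ℝ) ^ (-p) with hZ_def
  have hZ0 : 0 ≤ Z := tsum_nonneg fun i => auxP_nonneg p i
  have h2p : (0:ℝ) < 2 ^ p := Real.rpow_pos_of_pos two_pos p
  set A : ℝ := c * c * γ * 2 ^ p with hA_def
  have hA0 : (0:ℝ) < A := by
    apply mul_pos (mul_pos (mul_pos hc hc) hγ) h2p
  refine ⟨A * 3 * (Z + 1) ^ 3, by positivity, ?_⟩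
  intro n hn
  -- the reindexing equivalence
  set S := {q : ℕ × ℕ // n < q.1 ∧ 1 ≤ q.2} with hS_def
  set e : ℕ × ℕ ≃ S :=
    { toFun := fun x => ⟨(x.1 + n + 1, x.2 + 1), by constructor <;> simp <;> omega⟩
      invFun := fun q => (q.1.1 - n - 1, q.1.2 - 1)
      left_inv := fun x => by
        obtain ⟨x1, x2⟩ := x
        have hx : x1 + n + 1 - n - 1 = x1 := by omega
        simp [hx]
      right_inv := fun q => by
        obtain ⟨⟨u, v⟩, h1, h2⟩ := q
        have h1' : n < u := h1
        have h2' : 1 ≤ v := h2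
        apply Subtype.ext
        have e1 : u - n - 1 + n + 1 = u := by omega
        have e2 : v - 1 + 1 = v := by omega
        simp [e1, e2] } with he_def
  -- one-dimensional pieces
  set f1 : ℕ → ℝ := fun m => ((m + n + 1 : ℕ) : ℝ) ^ (-s) with hf1_def
  set g : ℕ → ℝ := fun m => ((m + 1 : ℕ) : ℝ) ^ (-p) with hg_def
  set q1 : ℕ → ℝ := fun m => ((m + n + 1 : ℕ) : ℝ) ^ (-p) with hq1_def
  set K : ℕ → ℕ → ℝ :=
    fun x1 y1 => q1 y1 + ((1 + Nat.dist x1 y1 : ℕ) : ℝ) ^ (-p) with hK_def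
  have hf1_nonneg : ∀ m, 0 ≤ f1 m := fun m => Real.rpow_nonneg (Nat.cast_nonneg _) _
  have hg_nonneg : ∀ m, 0 ≤ g m := fun m => Real.rpow_nonneg (Nat.cast_nonneg _) _
  have hq1_nonneg : ∀ m, 0 ≤ q1 m := fun m => Real.rpow_nonneg (Nat.cast_nonneg _) _
  have hK_nonneg : ∀ x1 y1, 0 ≤ K x1 y1 := fun x1 y1 =>
    add_nonneg (hq1_nonneg _) (Real.rpow_nonneg (Nat.cast_nonneg _) _)
  have hg_sum : Summable g := aux_shift_summable hp1 1
  have hf1_sum : Summable f1 :=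
    (summable_nat_add_iff (n + 1)).2 (Real.summable_nat_rpow.2 (by linarith))
  have hq1_sum : Summable q1 := (summable_nat_add_iff (n + 1)).2 (auxP_summable hp1)
  have hr_sum : ∀ x1 : ℕ, Summable (fun y1 : ℕ => ((1 + Nat.dist x1 y1 : ℕ) : ℝ) ^ (-p)) :=
    fun x1 => aux_dist_summable hp1 x1
  have hK_sum : ∀ x1, Summable (K x1) := fun x1 => hq1_sum.add (hr_sum x1)
  have hK_tsum : ∀ x1, ∑' y1, K x1 y1 ≤ 3 * Z := by
    intro x1
    rw [hK_def, Summable.tsum_add hq1_sum (hr_sum x1)]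
    have h1 : ∑' m, q1 m ≤ Z := aux_shift_le hp1 (n + 1)
    have h2 := aux_dist_tsum_le hp1 x1
    rw [← hZ_def] at h2
    linarith
  have hg_tsum : ∑' m, g m ≤ Z := aux_shift_le hp1 1
  -- the pointwise bound
  have hbd : ∀ x y : ℕ × ℕ,
      ‖a (x.1 + n + 1, x.2 + 1)‖ * ‖a (y.1 + n + 1, y.2 + 1)‖ *
        ‖G (x.1 + n + 1, x.2 + 1) (y.1 + n + 1, y.2 + 1)‖
      ≤ A * (f1 x.1 * g x.2) * (K x.1 y.1 * g y.2) := by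
    intro x y
    set u1 : ℕ := x.1 + n + 1
    set u2 : ℕ := x.2 + 1
    set v1 : ℕ := y.1 + n + 1
    set v2 : ℕ := y.2 + 1
    have hu1 : (1:ℕ) ≤ u1 := by omega
    have hu2 : (1:ℕ) ≤ u2 := by omega
    have hv1 : (1:ℕ) ≤ v1 := by omega
    have hv2 : (1:ℕ) ≤ v2 := by omega
    have hau : ‖a (u1, u2)‖ ≤ c * ((u1:ℝ) ^ (-p) * (u2:ℝ) ^ (-p)) := by
      calc ‖a (u1, u2)‖ ≤ c * nrm (u1, u2) ^ (-s) := ha (u1, u2) hu1 hu2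
        _ ≤ c * ((u1:ℝ) ^ (-p) * (u2:ℝ) ^ (-p)) :=
          mul_le_mul_of_nonneg_left (aux_nrm (by linarith) u1 u2 hu1 hu2) hc.le
    have hav : ‖a (v1, v2)‖ ≤ c * ((v1:ℝ) ^ (-p) * (v2:ℝ) ^ (-p)) := by
      calc ‖a (v1, v2)‖ ≤ c * nrm (v1, v2) ^ (-s) := ha (v1, v2) hv1 hv2
        _ ≤ c * ((v1:ℝ) ^ (-p) * (v2:ℝ) ^ (-p)) :=
          mul_le_mul_of_nonneg_left (aux_nrm (by linarith) v1 v2 hv1 hv2) hc.le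
    set D : ℕ := 1 + Nat.dist x.1 y.1 with hD_def
    have hdist : Nat.dist u1 v1 = Nat.dist x.1 y.1 := aux_nat_dist_shift x.1 y.1 (n + 1)
    have hGb : ‖G (u1, u2) (v1, v2)‖ ≤ γ * ((D:ℕ):ℝ) ^ (-p) := by
      calc ‖G (u1, u2) (v1, v2)‖ ≤ γ * (1 + dst (u1, u2) (v1, v2)) ^ (-s) :=
            hG (u1, u2) (v1, v2) hu1 hu2 hv1 hv2
        _ ≤ γ * ((D:ℕ):ℝ) ^ (-p) := by
            apply mul_le_mul_of_nonneg_left _ hγ.le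
            have := aux_dst (s := s) (p := p) hp0 (by linarith) (u1, u2) (v1, v2)
            rwa [show ((u1, u2) : ℕ × ℕ).1 = u1 from rfl,
              show ((v1, v2) : ℕ × ℕ).1 = v1 from rfl, hdist] at this
    -- aux_three
    have hxyz : (u1 : ℝ) ≤ (v1 : ℝ) + ((D:ℕ):ℝ) := by
      have : u1 ≤ v1 + D := by simp [hD_def, Nat.dist]; omega
      exact_mod_cast this
    have h3 := aux_three (p := p) hp0
      (by exact_mod_cast hu1) (by exact_mod_cast hv1)
      (by exact_mod_cast (show (1:ℕ) ≤ D by omega)) hxyz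
    have hU1 : (0:ℝ) ≤ (u1:ℝ) ^ (-p) := Real.rpow_nonneg (Nat.cast_nonneg _) _
    have hU2 : (0:ℝ) ≤ (u2:ℝ) ^ (-p) := Real.rpow_nonneg (Nat.cast_nonneg _) _
    have hV1 : (0:ℝ) ≤ (v1:ℝ) ^ (-p) := Real.rpow_nonneg (Nat.cast_nonneg _) _
    have hV2 : (0:ℝ) ≤ (v2:ℝ) ^ (-p) := Real.rpow_nonneg (Nat.cast_nonneg _) _
    have hR0 : (0:ℝ) ≤ ((D:ℕ):ℝ) ^ (-p) := Real.rpow_nonneg (Nat.cast_nonneg _) _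
    have hsplit : (u1:ℝ) ^ (-p) * (u1:ℝ) ^ (-p) = (u1:ℝ) ^ (-s) := by
      rw [← Real.rpow_add (by exact_mod_cast hu1 : (0:ℝ) < (u1:ℝ))]
      congr 1
      rw [hp_def]; ring
    calc ‖a (u1, u2)‖ * ‖a (v1, v2)‖ * ‖G (u1, u2) (v1, v2)‖
        ≤ (c * ((u1:ℝ) ^ (-p) * (u2:ℝ) ^ (-p))) * (c * ((v1:ℝ) ^ (-p) * (v2:ℝ) ^ (-p))) *
            (γ * ((D:ℕ):ℝ) ^ (-p)) := by
          apply mul_le_mul (mul_le_mul hau hav (norm_nonneg _) (by positivity))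
            hGb (norm_nonneg _) (by positivity)
      _ = (c * c * γ) * ((u1:ℝ) ^ (-p) * (u2:ℝ) ^ (-p) * (v2:ℝ) ^ (-p)) *
            ((v1:ℝ) ^ (-p) * ((D:ℕ):ℝ) ^ (-p)) := by ring
      _ ≤ (c * c * γ) * ((u1:ℝ) ^ (-p) * (u2:ℝ) ^ (-p) * (v2:ℝ) ^ (-p)) *
            (2 ^ p * ((u1:ℝ) ^ (-p) * ((v1:ℝ) ^ (-p) + ((D:ℕ):ℝ) ^ (-p)))) := by
          apply mul_le_mul_of_nonneg_left h3 (by positivity)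
      _ = A * (((u1:ℝ) ^ (-p) * (u1:ℝ) ^ (-p)) * (u2:ℝ) ^ (-p)) *
            (((v1:ℝ) ^ (-p) + ((D:ℕ):ℝ) ^ (-p)) * (v2:ℝ) ^ (-p)) := by
          rw [hA_def]; ring
      _ = A * (f1 x.1 * g x.2) * (K x.1 y.1 * g y.2) := by
          rw [hsplit, hf1_def, hg_def, hK_def, hq1_def, hD_def]
  -- inner sums
  have hb_sum : ∀ x1 : ℕ, Summable (fun y : ℕ × ℕ => K x1 y.1 * g y.2) := fun x1 =>
    Summable.mul_of_nonneg (hK_sum x1) hg_sum (fun y1 => hK_nonneg x1 y1) hg_nonneg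
  have hb_tsum : ∀ x1 : ℕ, ∑' y : ℕ × ℕ, K x1 y.1 * g y.2 ≤ 3 * Z * Z := by
    intro x1
    rw [Summable.tsum_prod' (hb_sum x1) (fun y1 => (hg_sum.mul_left (K x1 y1)))]
    calc ∑' y1, ∑' y2, K x1 y1 * g y2 = ∑' y1, K x1 y1 * ∑' y2, g y2 :=
          tsum_congr fun y1 => hg_sum.tsum_mul_left _
      _ = (∑' y1, K x1 y1) * ∑' y2, g y2 := (hK_sum x1).tsum_mul_right _
      _ ≤ (3 * Z) * Z := by
          apply mul_le_mul (hK_tsum x1) hg_tsum (tsum_nonneg hg_nonneg) (by positivity)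
      _ = 3 * Z * Z := by ring
  have hinner : ∀ x : ℕ × ℕ,
      (∑' l : S, ‖a (x.1 + n + 1, x.2 + 1)‖ * ‖a l.1‖ * ‖G (x.1 + n + 1, x.2 + 1) l.1‖)
        ≤ A * (f1 x.1 * g x.2) * (3 * Z * Z) := by
    intro x
    rw [← Equiv.tsum_eq e (fun l : S =>
      ‖a (x.1 + n + 1, x.2 + 1)‖ * ‖a l.1‖ * ‖G (x.1 + n + 1, x.2 + 1) l.1‖)]
    have hb_sum' : Summable (fun y : ℕ × ℕ => A * (f1 x.1 * g x.2) * (K x.1 y.1 * g y.2)) :=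
      (hb_sum x.1).mul_left _
    have hterm_sum : Summable (fun y : ℕ × ℕ =>
        ‖a (x.1 + n + 1, x.2 + 1)‖ * ‖a (e y).1‖ * ‖G (x.1 + n + 1, x.2 + 1) (e y).1‖) :=
      Summable.of_nonneg_of_le (fun y => by positivity) (fun y => hbd x y) hb_sum'
    calc (∑' y : ℕ × ℕ, ‖a (x.1 + n + 1, x.2 + 1)‖ * ‖a (e y).1‖ *
            ‖G (x.1 + n + 1, x.2 + 1) (e y).1‖)
        ≤ ∑' y : ℕ × ℕ, A * (f1 x.1 * g x.2) * (K x.1 y.1 * g y.2) :=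
          Summable.tsum_le_tsum (fun y => hbd x y) hterm_sum hb_sum'
      _ = A * (f1 x.1 * g x.2) * ∑' y : ℕ × ℕ, K x.1 y.1 * g y.2 :=
          (hb_sum x.1).tsum_mul_left _
      _ ≤ A * (f1 x.1 * g x.2) * (3 * Z * Z) := by
          apply mul_le_mul_of_nonneg_left (hb_tsum x.1)
          exact mul_nonneg hA0.le (mul_nonneg (hf1_nonneg _) (hg_nonneg _))
  -- outer sum
  rw [← Equiv.tsum_eq e (fun j : S => ∑' l : S, ‖a j.1‖ * ‖a l.1‖ * ‖G j.1 l.1‖)]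
  have hBo_sum : Summable (fun x : ℕ × ℕ => f1 x.1 * g x.2) :=
    Summable.mul_of_nonneg hf1_sum hg_sum hf1_nonneg hg_nonneg
  have hBo_sum' : Summable (fun x : ℕ × ℕ => A * (f1 x.1 * g x.2) * (3 * Z * Z)) :=
    (hBo_sum.mul_left A).mul_right _
  have hI_sum : Summable (fun x : ℕ × ℕ =>
      ∑' l : S, ‖a (e x).1‖ * ‖a l.1‖ * ‖G (e x).1 l.1‖) :=
    Summable.of_nonneg_of_le
      (fun x => tsum_nonneg fun l => by positivity) (fun x => hinner x) hBo_sum'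
  have hBo_tsum : ∑' x : ℕ × ℕ, f1 x.1 * g x.2 ≤ (n:ℝ) ^ (-(s-1)) * Z := by
    rw [Summable.tsum_prod' hBo_sum (fun x1 => hg_sum.mul_left (f1 x1))]
    calc ∑' x1, ∑' x2, f1 x1 * g x2 = ∑' x1, f1 x1 * ∑' x2, g x2 :=
          tsum_congr fun x1 => hg_sum.tsum_mul_left _
      _ = (∑' x1, f1 x1) * ∑' x2, g x2 := hf1_sum.tsum_mul_right _
      _ ≤ (n:ℝ) ^ (-(s-1)) * Z := by
          apply mul_le_mul (aux_tail_rpow hs n hn) hg_tsum (tsum_nonneg hg_nonneg)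
            (Real.rpow_nonneg (Nat.cast_nonneg n) _)
  calc (∑' x : ℕ × ℕ, ∑' l : S, ‖a (e x).1‖ * ‖a l.1‖ * ‖G (e x).1 l.1‖)
      ≤ ∑' x : ℕ × ℕ, A * (f1 x.1 * g x.2) * (3 * Z * Z) :=
        Summable.tsum_le_tsum (fun x => hinner x) hI_sum hBo_sum'
    _ = (A * (3 * Z * Z)) * ∑' x : ℕ × ℕ, f1 x.1 * g x.2 := by
        rw [show (fun x : ℕ × ℕ => A * (f1 x.1 * g x.2) * (3 * Z * Z))
          = fun x : ℕ × ℕ => (A * (3 * Z * Z)) * (f1 x.1 * g x.2) from funext fun x => by ring]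
        exact hBo_sum.tsum_mul_left _
    _ ≤ (A * (3 * Z * Z)) * ((n:ℝ) ^ (-(s-1)) * Z) := by
        apply mul_le_mul_of_nonneg_left hBo_tsum (by positivity)
    _ ≤ A * 3 * (Z + 1) ^ 3 * (n:ℝ) ^ (-(s-1)) := by
        have hcube : Z ^ 3 ≤ (Z + 1) ^ 3 := pow_le_pow_left₀ hZ0 (by linarith) 3
        have hrn : (0:ℝ) ≤ (n:ℝ) ^ (-(s-1)) := Real.rpow_nonneg (Nat.cast_nonneg n) _
        nlinarith [mul_nonneg hA0.le hrn, mul_le_mul_of_nonneg_left hcube hA0.le]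
end

section
/- Let {ψ_j : j ∈ ℕ²} be a frame for H with lower frame bound A and upper frame bound B, and let g = ∑_{1≤l≤n} a_l ψ_l be an element of H_n = span{ψ_j : 1 ≤ j ≤ n}. If the localization |⟨ψ_j, ψ_l⟩| ≤ γ(1+‖j−l‖₂)^{-s} holds with s > 2, then ∑_{j₁ > m₁, j₂ ∈ ℕ} |⟨g, ψ_j⟩|² ≤ ‖a‖₂² · (2sγ²/(s−1)²) · n₁ n₂ · (m₁ − n₁)^{-(s-1)} for all m₁ > n₁. -/
open scoped InnerProductSpace

def Pos2 : Type := {p : ℕ × ℕ // 1 ≤ p.1 ∧ 1 ≤ p.2}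

private lemma step_ineq {s : ℝ} (hs : 1 < s) {t : ℝ} (ht : 1 ≤ t) :
    (s - 1) * (t + 1) ^ (-s) ≤ t ^ (1 - s) - (t + 1) ^ (1 - s) := by
  have ht0 : (0:ℝ) < t := by linarith
  obtain ⟨c, hc, hderiv⟩ := exists_hasDerivAt_eq_slope (fun x : ℝ => x ^ (1 - s))
    (fun x : ℝ => (1 - s) * x ^ (-s)) (by linarith : t < t + 1)
    (by
      apply ContinuousOn.rpow_const continuousOn_id
      intro x hx
      rw [Set.mem_Icc] at hx
      exact Or.inl (by intro h; simp only [id_eq] at h; rw [h] at hx; linarith [hx.1]))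
    (by
      intro x hx
      rw [Set.mem_Ioo] at hx
      have hx0 : x ≠ 0 := by intro h; rw [h] at hx; linarith [hx.1]
      have h := Real.hasDerivAt_rpow_const (x := x) (p := 1 - s) (Or.inl hx0)
      rw [show (1 - s) - 1 = -s by ring] at h
      exact h)
  rw [Set.mem_Ioo] at hc
  have hc0 : 0 < c := by linarith
  rw [show t + 1 - t = 1 by ring, div_one] at hderiv
  have h1 : t ^ (1-s) - (t+1) ^ (1-s) = (s - 1) * c ^ (-s) := by nlinarith [hderiv]
  rw [h1]
  apply mul_le_mul_of_nonneg_left _ (by linarith : (0:ℝ) ≤ s - 1)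
  exact Real.rpow_le_rpow_of_nonpos hc0 hc.2.le (by linarith)

private lemma tail_partial {s : ℝ} (hs : 1 < s) {K : ℝ} (hK : 1 ≤ K) (N : ℕ) :
    ∑ k ∈ Finset.range N, (K + 1 + (k:ℝ)) ^ (-s) ≤ K ^ (1 - s) / (s - 1) := by
  have hs1 : (0:ℝ) < s - 1 := by linarith
  have h1 : ∀ k ∈ Finset.range N, (K + 1 + (k:ℝ)) ^ (-s)
      ≤ ((K + (k:ℝ)) ^ (1-s) - (K + ((k:ℕ)+1:ℝ)) ^ (1-s)) / (s-1) := by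
    intro k _
    rw [le_div_iff₀ hs1]
    have hkc : (0:ℝ) ≤ (k:ℝ) := Nat.cast_nonneg k
    have := step_ineq hs (t := K + (k:ℝ)) (by linarith)
    calc (K + 1 + (k:ℝ)) ^ (-s) * (s-1) = (s-1) * ((K + (k:ℝ)) + 1) ^ (-s) := by
          ring_nf
      _ ≤ (K + (k:ℝ)) ^ (1-s) - ((K + (k:ℝ)) + 1) ^ (1-s) := this
      _ = (K + (k:ℝ)) ^ (1-s) - (K + ((k:ℕ)+1:ℝ)) ^ (1-s) := by ring_nf
  calc ∑ k ∈ Finset.range N, (K + 1 + (k:ℝ)) ^ (-s)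
      ≤ ∑ k ∈ Finset.range N,
        ((K + (k:ℝ)) ^ (1-s) - (K + ((k:ℕ)+1:ℝ)) ^ (1-s)) / (s-1) :=
        Finset.sum_le_sum h1
    _ = (∑ k ∈ Finset.range N,
        ((fun m : ℕ => (K + (m:ℝ)) ^ (1-s)) k - (fun m : ℕ => (K + (m:ℝ)) ^ (1-s)) (k+1))) / (s-1) := by
        rw [Finset.sum_div]
        congr 1 with k
        push_cast
        ring_nf
    _ = ((K + ((0:ℕ):ℝ)) ^ (1-s) - (K + (N:ℝ)) ^ (1-s)) / (s-1) := by
        rw [Finset.sum_range_sub' (fun m : ℕ => (K + (m:ℝ)) ^ (1-s)) N]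
    _ ≤ K ^ (1-s) / (s-1) := by
        have h0 : (0:ℝ) ≤ (K + (N:ℝ)) ^ (1-s) := Real.rpow_nonneg (by positivity) _
        have : (K + ((0:ℕ):ℝ)) ^ (1-s) - (K + (N:ℝ)) ^ (1-s) ≤ K ^ (1-s) := by
          norm_num
          linarith
        gcongr


private lemma tail_summable {s : ℝ} (hs : 1 < s) {K : ℝ} (hK : 1 ≤ K) :
    Summable (fun k : ℕ => (K + 1 + (k:ℝ)) ^ (-s)) :=
  summable_of_sum_range_le
    (fun k => Real.rpow_nonneg (by positivity) _) (tail_partial hs hK)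

private lemma tail_tsum {s : ℝ} (hs : 1 < s) {K : ℝ} (hK : 1 ≤ K) :
    ∑' k : ℕ, (K + 1 + (k:ℝ)) ^ (-s) ≤ K ^ (1 - s) / (s - 1) :=
  Real.tsum_le_of_sum_range_le
    (fun k => Real.rpow_nonneg (by positivity) _) (tail_partial hs hK)

private lemma center_summable {s : ℝ} (hs : 1 < s) (c : ℕ) :
    Summable (fun k : ℕ => (1 + |(k:ℝ) - (c:ℝ)|) ^ (-s)) := by
  rw [← summable_nat_add_iff c]
  have h2 : Summable (fun n : ℕ => ((n:ℝ)) ^ (-s)) :=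
    Real.summable_nat_rpow.mpr (by linarith)
  have h3 := (summable_nat_add_iff 1).mpr h2
  apply h3.congr
  intro k
  push_cast
  rw [show ((k:ℝ) + (c:ℝ)) - (c:ℝ) = (k:ℝ) by ring, abs_of_nonneg (Nat.cast_nonneg k)]
  congr 1
  ring

private lemma center_tsum {s : ℝ} (hs : 1 < s) (c : ℕ) :
    ∑' k : ℕ, (1 + |(k:ℝ) - (c:ℝ)|) ^ (-s) ≤ 2 * s / (s - 1) := by
  have hs1 : (0:ℝ) < s - 1 := by linarith
  have hsum := center_summable hs c
  rw [← Summable.sum_add_tsum_nat_add c hsum]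
  -- first part: ∑_{i<c} (1+|i-c|)^(-s)
  have hpart1 : ∑ i ∈ Finset.range c, (1 + |(i:ℝ) - (c:ℝ)|) ^ (-s) ≤ 1 / (s-1) := by
    rw [← Finset.sum_range_reflect]
    calc ∑ j ∈ Finset.range c, (1 + |((c - 1 - j : ℕ):ℝ) - (c:ℝ)|) ^ (-s)
        = ∑ j ∈ Finset.range c, ((1:ℝ) + 1 + (j:ℝ)) ^ (-s) := by
          apply Finset.sum_congr rfl
          intro j hj
          rw [Finset.mem_range] at hj
          congr 1
          have h1 : ((c - 1 - j : ℕ):ℝ) = (c:ℝ) - 1 - (j:ℝ) := by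
            have : c - 1 - j + (1 + j) = c := by omega
            have h := congrArg (fun m : ℕ => (m:ℝ)) this
            push_cast at h
            linarith
          rw [h1, show (c:ℝ) - 1 - (j:ℝ) - (c:ℝ) = -(1 + (j:ℝ)) by ring, abs_neg,
            abs_of_nonneg (by positivity)]
          ring
      _ ≤ (1:ℝ) ^ (1 - s) / (s - 1) := tail_partial hs le_rfl c
      _ = 1 / (s-1) := by rw [Real.one_rpow]
  -- second part: ∑' i, (1+|i+c-c|)^(-s) = ∑' i, (1+i)^(-s) ≤ 1 + 1/(s-1)
  have hpart2 : ∑' i : ℕ, (1 + |((i + c : ℕ):ℝ) - (c:ℝ)|) ^ (-s) ≤ 1 + 1 / (s-1) := by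
    have heq : ∀ i : ℕ, (1 + |((i + c : ℕ):ℝ) - (c:ℝ)|) ^ (-s) = (1 + (i:ℝ)) ^ (-s) := by
      intro i
      push_cast
      rw [show ((i:ℝ) + (c:ℝ)) - (c:ℝ) = (i:ℝ) by ring, abs_of_nonneg (Nat.cast_nonneg i)]
    rw [tsum_congr heq]
    have hsum2 : Summable (fun i : ℕ => (1 + (i:ℝ)) ^ (-s)) := by
      apply (center_summable hs 0).congr
      intro i
      rw [Nat.cast_zero, sub_zero, abs_of_nonneg (Nat.cast_nonneg i)]
    rw [Summable.tsum_eq_zero_add hsum2]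
    have this2 : ∑' i : ℕ, (1 + ((i + 1 : ℕ):ℝ)) ^ (-s) ≤ 1 / (s - 1) := by
      have heq2 : ∀ i : ℕ, (1 + ((i + 1 : ℕ):ℝ)) ^ (-s) = ((1:ℝ) + 1 + (i:ℝ)) ^ (-s) := by
        intro i; congr 1; push_cast; ring
      rw [tsum_congr heq2]
      calc ∑' i : ℕ, ((1:ℝ) + 1 + (i:ℝ)) ^ (-s) ≤ (1:ℝ) ^ (1-s) / (s-1) :=
            tail_tsum hs le_rfl
        _ = 1 / (s-1) := by rw [Real.one_rpow]
    have h0 : (1 + ((0:ℕ):ℝ)) ^ (-s) = 1 := by norm_num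
    rw [h0]
    linarith [this2]
  have h2s : 1 / (s-1) + (1 + 1 / (s-1)) ≤ 2 * s / (s-1) := by
    have he : 1 / (s-1) + (1 + 1 / (s-1)) = (s+1)/(s-1) := by field_simp; ring
    rw [he, div_le_div_iff₀ hs1 hs1]
    nlinarith
  calc ∑ i ∈ Finset.range c, (1 + |(i:ℝ) - (c:ℝ)|) ^ (-s)
        + ∑' i : ℕ, (1 + |((i + c : ℕ):ℝ) - (c:ℝ)|) ^ (-s)
      ≤ 1/(s-1) + (1 + 1/(s-1)) := add_le_add hpart1 hpart2
    _ ≤ 2 * s / (s-1) := h2s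

private lemma fact_ineq {s : ℝ} (hs : 0 < s) {d1 d2 : ℝ} (h1 : 0 ≤ d1) (h2 : 0 ≤ d2) :
    ((1 + Real.sqrt (d1^2 + d2^2)) ^ (-s))^2 ≤ (1 + d1) ^ (-s) * (1 + d2) ^ (-s) := by
  set D := Real.sqrt (d1^2 + d2^2) with hD
  have hD0 : 0 ≤ D := Real.sqrt_nonneg _
  have hDsq : D^2 = d1^2 + d2^2 := Real.sq_sqrt (by positivity)
  have h2D : d1 + d2 ≤ 2 * D := by
    have e : 4 * (d1^2 + d2^2) = (2*D)^2 := by rw [mul_pow]; rw [hDsq]; ring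
    have hle : Real.sqrt ((d1+d2)^2) ≤ Real.sqrt ((2*D)^2) := by
      apply Real.sqrt_le_sqrt
      nlinarith [sq_nonneg (d1 - d2)]
    rwa [Real.sqrt_sq (by positivity), Real.sqrt_sq (by positivity)] at hle
  have hmul : d1 * d2 ≤ D^2 := by nlinarith [sq_nonneg (d1 - d2)]
  have key : (1+d1) * (1+d2) ≤ (1+D)^2 := by nlinarith
  have hbase : (0:ℝ) < 1 + D := by linarith
  have hbd : (0:ℝ) < (1+d1) * (1+d2) := by positivity
  have e1 : ((1+D)^(-s))^2 = ((1+D)^2) ^ (-s) := by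
    rw [← Real.rpow_natCast ((1+D)^(-s)) 2, ← Real.rpow_mul hbase.le,
        ← Real.rpow_natCast (1+D) 2, ← Real.rpow_mul hbase.le]
    norm_num
    ring_nf
  rw [e1, ← Real.mul_rpow (by linarith) (by linarith)]
  exact Real.rpow_le_rpow_of_nonpos hbd key (by linarith)

private noncomputable def hfun (s : ℝ) (x y : ℕ) : ℝ := (1 + |(x:ℝ) - (y:ℝ)|) ^ (-s)

private lemma hfun_nonneg (s : ℝ) (x y : ℕ) : 0 ≤ hfun s x y :=
  Real.rpow_nonneg (by positivity) _

private def eShift (m : ℕ) : ℕ ≃ {i : ℕ // m < i} where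
  toFun k := ⟨m + 1 + k, by omega⟩
  invFun i := i.1 - (m + 1)
  left_inv k := by simp
  right_inv i := Subtype.ext (by have := i.2; simp; omega)

private lemma bound_col {s : ℝ} (hs : 1 < s) {n1 m₁ l1 : ℕ} (hl : l1 ≤ n1) (hm : n1 < m₁) :
    Summable (fun x : {i : ℕ // m₁ < i} => hfun s x.1 l1) ∧
    ∑' x : {i : ℕ // m₁ < i}, hfun s x.1 l1 ≤ ((m₁:ℝ) - (n1:ℝ)) ^ (-(s-1)) / (s-1) := by
  have hss : (0:ℝ) < s - 1 := by linarith
  have hcast : (l1:ℝ) ≤ (n1:ℝ) := Nat.cast_le.mpr hl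
  have hmn1 : (1:ℝ) ≤ (m₁:ℝ) - (n1:ℝ) := by
    have : (n1:ℝ) + 1 ≤ (m₁:ℝ) := by exact_mod_cast hm
    linarith
  have hK1 : 1 ≤ (m₁:ℝ) + 1 - (l1:ℝ) := by linarith
  have heq : ∀ k : ℕ, hfun s ((eShift m₁) k).1 l1 = (((m₁:ℝ) + 1 - (l1:ℝ)) + 1 + (k:ℝ)) ^ (-s) := by
    intro k
    simp only [hfun, eShift, Equiv.coe_fn_mk]
    have hkc : (0:ℝ) ≤ (k:ℝ) := Nat.cast_nonneg k
    have hge : (0:ℝ) ≤ ((m₁ + 1 + k : ℕ):ℝ) - (l1:ℝ) := by push_cast; linarith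
    rw [abs_of_nonneg hge]
    congr 1
    push_cast
    ring
  constructor
  · exact ((eShift m₁).summable_iff).mp ((tail_summable hs hK1).congr (fun k => (heq k).symm))
  · rw [← (eShift m₁).tsum_eq, tsum_congr heq]
    calc ∑' k : ℕ, (((m₁:ℝ) + 1 - (l1:ℝ)) + 1 + (k:ℝ)) ^ (-s)
        ≤ ((m₁:ℝ) + 1 - (l1:ℝ)) ^ (1-s) / (s-1) := tail_tsum hs hK1
      _ ≤ ((m₁:ℝ) - (n1:ℝ)) ^ (1-s) / (s-1) := by
          have := Real.rpow_le_rpow_of_nonpos (x := (m₁:ℝ) - (n1:ℝ))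
            (y := (m₁:ℝ) + 1 - (l1:ℝ)) (by linarith)
            (by linarith) (by linarith : 1 - s ≤ 0)
          exact div_le_div_of_nonneg_right this hss.le
      _ = ((m₁:ℝ) - (n1:ℝ)) ^ (-(s-1)) / (s-1) := by rw [neg_sub]

private lemma bound_row {s : ℝ} (hs : 1 < s) {l2 : ℕ} (hl : 1 ≤ l2) :
    Summable (fun y : {i : ℕ // 0 < i} => hfun s y.1 l2) ∧
    ∑' y : {i : ℕ // 0 < i}, hfun s y.1 l2 ≤ 2 * s / (s-1) := by
  have heq : ∀ k : ℕ, hfun s ((eShift 0) k).1 l2 = (1 + |(k:ℝ) - ((l2 - 1 : ℕ):ℝ)|) ^ (-s) := by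
    intro k
    simp only [hfun, eShift, Equiv.coe_fn_mk]
    congr 1
    rw [Nat.cast_sub hl]
    push_cast
    congr 1
    ring
  constructor
  · exact ((eShift 0).summable_iff).mp ((center_summable hs (l2-1)).congr (fun k => (heq k).symm))
  · rw [← (eShift 0).tsum_eq, tsum_congr heq]
    exact center_tsum hs (l2-1)

private def eProd (m : ℕ) : ({i : ℕ // m < i} × {i : ℕ // 0 < i}) ≃ {p : ℕ × ℕ // m < p.1 ∧ 1 ≤ p.2} where
  toFun x := ⟨(x.1.1, x.2.1), ⟨x.1.2, x.2.2⟩⟩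
  invFun p := (⟨p.1.1, p.2.1⟩, ⟨p.1.2, p.2.2⟩)
  left_inv x := rfl
  right_inv p := rfl

set_option maxHeartbeats 1000000 in

private lemma bound_prod {s : ℝ} (hs1 : 1 < s) {n1 m₁ : ℕ} (hm : n1 < m₁)
    {l : ℕ × ℕ} (hl2 : 1 ≤ l.2) (hl3 : l.1 ≤ n1) :
    Summable (fun j : {p : ℕ × ℕ // m₁ < p.1 ∧ 1 ≤ p.2} =>
      hfun s j.1.1 l.1 * hfun s j.1.2 l.2) ∧
    (∑' j : {p : ℕ × ℕ // m₁ < p.1 ∧ 1 ≤ p.2}, hfun s j.1.1 l.1 * hfun s j.1.2 l.2)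
      ≤ (((m₁:ℝ) - (n1:ℝ)) ^ (-(s-1)) / (s-1)) * (2 * s / (s-1)) := by
  have hss : (0:ℝ) < s - 1 := by linarith
  have hmn0 : (0:ℝ) < (m₁:ℝ) - (n1:ℝ) := by
    have : (n1:ℝ) < (m₁:ℝ) := Nat.cast_lt.mpr hm
    linarith
  have hprod : Summable (fun q : ({i : ℕ // m₁ < i} × {i : ℕ // 0 < i}) =>
      hfun s q.1.1 l.1 * hfun s q.2.1 l.2) :=
    Summable.mul_of_nonneg (bound_col hs1 hl3 hm).1 (bound_row hs1 hl2).1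
      (fun x => hfun_nonneg s x.1 l.1) (fun y => hfun_nonneg s y.1 l.2)
  constructor
  · exact ((eProd m₁).summable_iff (f := fun j : {p : ℕ × ℕ // m₁ < p.1 ∧ 1 ≤ p.2} =>
      hfun s j.1.1 l.1 * hfun s j.1.2 l.2)).mp hprod
  · have hre := (eProd m₁).tsum_eq (fun j : {p : ℕ × ℕ // m₁ < p.1 ∧ 1 ≤ p.2} =>
      hfun s j.1.1 l.1 * hfun s j.1.2 l.2)
    rw [← hre]
    have hstep : (∑' q : ({i : ℕ // m₁ < i} × {i : ℕ // 0 < i}),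
          hfun s q.1.1 l.1 * hfun s q.2.1 l.2)
        = ∑' x : {i : ℕ // m₁ < i}, ∑' y : {i : ℕ // 0 < i},
            hfun s x.1 l.1 * hfun s y.1 l.2 :=
      Summable.tsum_prod' hprod (fun x => Summable.mul_left (hfun s x.1 l.1) (bound_row hs1 hl2).1)
    calc ∑' q : ({i : ℕ // m₁ < i} × {i : ℕ // 0 < i}),
          hfun s ((eProd m₁) q).1.1 l.1 * hfun s ((eProd m₁) q).1.2 l.2
        = ∑' q : ({i : ℕ // m₁ < i} × {i : ℕ // 0 < i}),
          hfun s q.1.1 l.1 * hfun s q.2.1 l.2 := by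
          apply tsum_congr
          intro q
          rfl
      _ = ∑' x : {i : ℕ // m₁ < i}, ∑' y : {i : ℕ // 0 < i},
            hfun s x.1 l.1 * hfun s y.1 l.2 := hstep
      _ = (∑' x : {i : ℕ // m₁ < i}, hfun s x.1 l.1) *
            (∑' y : {i : ℕ // 0 < i}, hfun s y.1 l.2) := by
          rw [tsum_congr (fun x : {i : ℕ // m₁ < i} =>
            tsum_mul_left (f := fun y : {i : ℕ // 0 < i} => hfun s y.1 l.2)
              (a := hfun s x.1 l.1))]
          exact tsum_mul_right
      _ ≤ (((m₁:ℝ) - (n1:ℝ)) ^ (-(s-1)) / (s-1)) * (2 * s / (s-1)) :=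
          mul_le_mul (bound_col hs1 hl3 hm).2 (bound_row hs1 hl2).2
            (tsum_nonneg (fun y => hfun_nonneg s y.1 l.2))
            (div_nonneg (Real.rpow_nonneg hmn0.le _) hss.le)

set_option maxHeartbeats 1000000 in
theorem stmt12 {H : Type*} [NormedAddCommGroup H] [InnerProductSpace ℂ H]
    (s A B γ : ℝ) (hs : 2 < s) (hA : 0 < A) (hB : 0 < B) (hγ : 0 < γ)
    (ψ : ℕ × ℕ → H)
    (hframe : ∀ g : H,
      A * ‖g‖^2 ≤ ∑' p : Pos2, ‖⟪g, ψ p.1⟫_ℂ‖^2 ∧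
      ∑' p : Pos2, ‖⟪g, ψ p.1⟫_ℂ‖^2 ≤ B * ‖g‖^2)
    (hloc : ∀ j l : ℕ × ℕ, 1 ≤ j.1 → 1 ≤ j.2 → 1 ≤ l.1 → 1 ≤ l.2 →
      ‖⟪ψ j, ψ l⟫_ℂ‖ ≤ γ * (1 + dst j l) ^ (-s))
    (n : ℕ × ℕ) (hn1 : 1 ≤ n.1) (hn2 : 1 ≤ n.2)
    (a : ℕ × ℕ → ℂ) (g : H)
    (hg : g = ∑ l ∈ Finset.Icc ((1, 1) : ℕ × ℕ) n, a l • ψ l)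
    (m₁ : ℕ) (hm : n.1 < m₁) :
    ∑' j : {p : ℕ × ℕ // m₁ < p.1 ∧ 1 ≤ p.2}, ‖⟪g, ψ j.1⟫_ℂ‖^2
      ≤ (∑ l ∈ Finset.Icc ((1, 1) : ℕ × ℕ) n, ‖a l‖^2) *
        (2 * s * γ^2 / (s - 1)^2) * (n.1 : ℝ) * (n.2 : ℝ) *
        ((m₁ : ℝ) - (n.1 : ℝ)) ^ (-(s - 1)) := by
  classical
  have hs1 : (1:ℝ) < s := by linarith
  have hss : (0:ℝ) < s - 1 := by linarith
  set S : Finset (ℕ × ℕ) := Finset.Icc ((1, 1) : ℕ × ℕ) n with hSdef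
  have hmemS : ∀ l ∈ S, 1 ≤ l.1 ∧ 1 ≤ l.2 ∧ l.1 ≤ n.1 ∧ l.2 ≤ n.2 := by
    intro l hl
    rw [hSdef, Finset.mem_Icc] at hl
    obtain ⟨h1, h2⟩ := hl
    rw [Prod.le_def] at h1 h2
    exact ⟨h1.1, h1.2, h2.1, h2.2⟩
  have hSanon : 0 ≤ ∑ l ∈ S, ‖a l‖^2 := Finset.sum_nonneg fun l _ => sq_nonneg _
  have hmn0 : (0:ℝ) < (m₁:ℝ) - (n.1:ℝ) := by
    have : (n.1:ℝ) < (m₁:ℝ) := Nat.cast_lt.mpr hm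
    linarith
  -- pointwise bound
  have key : ∀ j : ℕ × ℕ, 1 ≤ j.1 → 1 ≤ j.2 →
      ‖⟪g, ψ j⟫_ℂ‖^2 ≤ (∑ l ∈ S, ‖a l‖^2) *
        (γ^2 * ∑ l ∈ S, hfun s j.1 l.1 * hfun s j.2 l.2) := by
    intro j hj1 hj2
    have hnorm : ‖⟪g, ψ j⟫_ℂ‖ ≤ ∑ l ∈ S, ‖a l‖ * (γ * (1 + dst l j) ^ (-s)) := by
      rw [hg, sum_inner]
      refine (norm_sum_le _ _).trans (Finset.sum_le_sum ?_)
      intro l hl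
      rw [inner_smul_left, norm_mul, RCLike.norm_conj]
      obtain ⟨hl1, hl2, _, _⟩ := hmemS l hl
      exact mul_le_mul_of_nonneg_left (hloc l j hl1 hl2 hj1 hj2) (norm_nonneg _)
    have hCS := Finset.sum_mul_sq_le_sq_mul_sq S (fun l => ‖a l‖)
      (fun l => γ * (1 + dst l j) ^ (-s))
    have hterm : ∀ l ∈ S, (γ * (1 + dst l j) ^ (-s))^2
        ≤ γ^2 * (hfun s j.1 l.1 * hfun s j.2 l.2) := by
      intro l _
      rw [mul_pow]
      apply mul_le_mul_of_nonneg_left _ (sq_nonneg γ)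
      have hf := fact_ineq (s := s) (by linarith)
        (abs_nonneg ((l.1:ℝ) - (j.1:ℝ))) (abs_nonneg ((l.2:ℝ) - (j.2:ℝ)))
      have hd : dst l j = Real.sqrt (|(l.1:ℝ) - (j.1:ℝ)|^2 + |(l.2:ℝ) - (j.2:ℝ)|^2) := by
        rw [dst, sq_abs, sq_abs]
      rw [hd]
      refine hf.trans_eq ?_
      simp only [hfun]
      rw [abs_sub_comm ((l.1:ℝ)) ((j.1:ℝ)), abs_sub_comm ((l.2:ℝ)) ((j.2:ℝ))]
    calc ‖⟪g, ψ j⟫_ℂ‖^2 ≤ (∑ l ∈ S, ‖a l‖ * (γ * (1 + dst l j) ^ (-s)))^2 :=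
          pow_le_pow_left₀ (norm_nonneg _) hnorm 2
      _ ≤ (∑ l ∈ S, ‖a l‖^2) * ∑ l ∈ S, (γ * (1 + dst l j) ^ (-s))^2 := hCS
      _ ≤ (∑ l ∈ S, ‖a l‖^2) * ∑ l ∈ S, γ^2 * (hfun s j.1 l.1 * hfun s j.2 l.2) :=
          mul_le_mul_of_nonneg_left (Finset.sum_le_sum hterm) hSanon
      _ = (∑ l ∈ S, ‖a l‖^2) * (γ^2 * ∑ l ∈ S, hfun s j.1 l.1 * hfun s j.2 l.2) := by
          rw [Finset.mul_sum S (fun l => hfun s j.1 l.1 * hfun s j.2 l.2) (γ^2)]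
  have hPsum : ∀ l ∈ S, Summable (fun j : {p : ℕ × ℕ // m₁ < p.1 ∧ 1 ≤ p.2} =>
      hfun s j.1.1 l.1 * hfun s j.1.2 l.2) := by
    intro l hl
    obtain ⟨_, hl2, hl3, _⟩ := hmemS l hl
    exact (bound_prod hs1 hm hl2 hl3).1
  have hPtsum : ∀ l ∈ S, (∑' j : {p : ℕ × ℕ // m₁ < p.1 ∧ 1 ≤ p.2},
      hfun s j.1.1 l.1 * hfun s j.1.2 l.2)
      ≤ (((m₁:ℝ) - (n.1:ℝ)) ^ (-(s-1)) / (s-1)) * (2 * s / (s-1)) := by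
    intro l hl
    obtain ⟨_, hl2, hl3, _⟩ := hmemS l hl
    exact (bound_prod hs1 hm hl2 hl3).2
  have hGsum : Summable (fun j : {p : ℕ × ℕ // m₁ < p.1 ∧ 1 ≤ p.2} =>
      (∑ l ∈ S, ‖a l‖^2) * (γ^2 * ∑ l ∈ S, hfun s j.1.1 l.1 * hfun s j.1.2 l.2)) :=
    (((summable_sum hPsum).mul_left (γ^2)).mul_left (∑ l ∈ S, ‖a l‖^2))
  have hFsum : Summable (fun j : {p : ℕ × ℕ // m₁ < p.1 ∧ 1 ≤ p.2} =>
      ‖⟪g, ψ j.1⟫_ℂ‖^2) :=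
    Summable.of_nonneg_of_le (fun j => sq_nonneg _)
      (fun j => key j.1 (by have := j.2.1; omega) j.2.2) hGsum
  have hcard : S.card = n.1 * n.2 := by
    rw [hSdef, show Finset.Icc ((1,1) : ℕ × ℕ) n
      = Finset.Icc 1 n.1 ×ˢ Finset.Icc 1 n.2 from rfl,
      Finset.card_product, Nat.card_Icc, Nat.card_Icc, Nat.add_sub_cancel, Nat.add_sub_cancel]
  calc ∑' j : {p : ℕ × ℕ // m₁ < p.1 ∧ 1 ≤ p.2}, ‖⟪g, ψ j.1⟫_ℂ‖^2
      ≤ ∑' j : {p : ℕ × ℕ // m₁ < p.1 ∧ 1 ≤ p.2},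
        (∑ l ∈ S, ‖a l‖^2) * (γ^2 * ∑ l ∈ S, hfun s j.1.1 l.1 * hfun s j.1.2 l.2) :=
        Summable.tsum_le_tsum (fun j => key j.1 (by have := j.2.1; omega) j.2.2) hFsum hGsum
    _ = (∑ l ∈ S, ‖a l‖^2) * (γ^2 * ∑ l ∈ S,
          ∑' j : {p : ℕ × ℕ // m₁ < p.1 ∧ 1 ≤ p.2}, hfun s j.1.1 l.1 * hfun s j.1.2 l.2) := by
        rw [tsum_mul_left, tsum_mul_left, Summable.tsum_finsetSum hPsum]
    _ ≤ (∑ l ∈ S, ‖a l‖^2) * (γ^2 * ∑ l ∈ S,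
          (((m₁:ℝ) - (n.1:ℝ)) ^ (-(s-1)) / (s-1)) * (2 * s / (s-1))) := by
        apply mul_le_mul_of_nonneg_left _ hSanon
        apply mul_le_mul_of_nonneg_left _ (sq_nonneg γ)
        exact Finset.sum_le_sum hPtsum
    _ = (∑ l ∈ S, ‖a l‖^2) * (γ^2 * ((n.1 * n.2 : ℕ) *
          ((((m₁:ℝ) - (n.1:ℝ)) ^ (-(s-1)) / (s-1)) * (2 * s / (s-1))))) := by
        rw [Finset.sum_const, hcard, nsmul_eq_mul]
    _ = (∑ l ∈ S, ‖a l‖^2) * (2 * s * γ^2 / (s - 1)^2) * (n.1 : ℝ) * (n.2 : ℝ) *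
          ((m₁ : ℝ) - (n.1 : ℝ)) ^ (-(s - 1)) := by
        push_cast
        field_simp
end

section
/- Let {ψ_j : j ∈ ℕ²} and {φ_j : j ∈ ℕ²} be frames for H with |⟨ψ_j, φ_l⟩| ≤ γ₁(1+|j₁−l₁|)^{-s}(1+|j₂−l₂|)^{-s} for some s > 1/2. For n, m ∈ ℕ² with m₁ > n₁, m₂ > n₂, let G_n = span{φ_j : 1 ≤ j ≤ n}, Q_n the orthogonal projection onto G_n, S_m the partial frame operator of {ψ_j}, W_n = Q_n S_m |_{G_n}, and B_{m,n} = (4sγ₁²/((2s−1)² λ_min(Φ_n))) n₁ n₂ [(m₁−n₁)^{-(2s-1)} + (m₂−n₂)^{-(2s-1)}], where Φ_n is the Gram matrix of {φ_j : 1 ≤ j ≤ n}, assumed invertible. Then ‖S − W_n‖_{G_n} ≤ B_{m,n}, where S is the full frame operator of {ψ_j} and the norm is the operator norm of the restriction to G_n. -/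
open scoped InnerProductSpace

lemma aux_mvt {t x : ℝ} (ht : 0 < t) (hx : 1 ≤ x) :
    t * (x+1) ^ (-(t+1)) ≤ x ^ (-t) - (x+1) ^ (-t) := by
  have hx0 : 0 < x := by linarith
  obtain ⟨c, hc, hslope⟩ := exists_hasDerivAt_eq_slope (fun u => u ^ (-t))
    (fun u => (-t) * u ^ (-t-1)) (by linarith : x < x + 1)
    (fun u hu => by
      have hu0 : u ≠ 0 := by have := hu.1; simp at this ⊢; nlinarith
      exact (Real.hasDerivAt_rpow_const (Or.inl hu0)).continuousAt.continuousWithinAt)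
    (fun u hu => by
      have hu0 : u ≠ 0 := by have := hu.1.le; nlinarith [hu.1]
      simpa using Real.hasDerivAt_rpow_const (p := -t) (Or.inl hu0))
  have hc0 : 0 < c := by nlinarith [hc.1]
  have hcx : c ≤ x + 1 := hc.2.le
  have h1 : x ^ (-t) - (x+1) ^ (-t) = t * c ^ (-t-1) := by
    field_simp at hslope
    nlinarith [hslope]
  rw [h1]
  have e : -(t+1) = -t-1 := by ring
  rw [e]
  have := Real.rpow_le_rpow_of_nonpos hc0 hcx (by linarith : -t-1 ≤ 0)
  nlinarith [this]

lemma aux_tail {t : ℝ} (ht : 0 < t) (K : ℕ) (hK : 1 ≤ K) (G : Finset ℕ)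
    (hG : ∀ k ∈ G, K ≤ k) :
    ∑ k ∈ G, ((1:ℝ) + k) ^ (-(t+1)) ≤ (K:ℝ) ^ (-t) / t := by
  set b : ℕ → ℝ := fun k => (k:ℝ) ^ (-t) with hb
  have hbante : ∀ {i j : ℕ}, 1 ≤ i → i ≤ j → b j ≤ b i := by
    intro i j hi hij
    exact Real.rpow_le_rpow_of_nonpos (by exact_mod_cast hi) (by exact_mod_cast hij)
      (by linarith)
  have hbnn : ∀ k : ℕ, 0 ≤ b k := fun k => Real.rpow_nonneg (Nat.cast_nonneg k) _
  have hstep : ∀ k ∈ G, ((1:ℝ) + k) ^ (-(t+1)) ≤ (b k - b (k+1)) / t := by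
    intro k hk
    have hk1 : 1 ≤ k := le_trans hK (hG k hk)
    have h := aux_mvt ht (by exact_mod_cast hk1 : (1:ℝ) ≤ (k:ℝ))
    rw [le_div_iff₀ ht, hb, add_comm (1:ℝ)]
    push_cast
    nlinarith [h]
  have htel : ∑ k ∈ G, (b k - b (k+1)) ≤ b K := by
    rcases G.eq_empty_or_nonempty with rfl | hGne
    · simpa using hbnn K
    · set M := G.max' hGne with hM
      have hsub : G ⊆ Finset.Icc K M := by
        intro k hk
        exact Finset.mem_Icc.mpr ⟨hG k hk, Finset.le_max' G k hk⟩
      have hnn : ∀ k ∈ Finset.Icc K M, k ∉ G → 0 ≤ b k - b (k+1) := by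
        intro k hk _
        have hk1 : 1 ≤ k := le_trans hK (Finset.mem_Icc.mp hk).1
        have := hbante hk1 (Nat.le_succ k)
        linarith
      have h1 : ∑ k ∈ G, (b k - b (k+1)) ≤ ∑ k ∈ Finset.Icc K M, (b k - b (k+1)) :=
        Finset.sum_le_sum_of_subset_of_nonneg hsub hnn
      have hKM : K ≤ M := hG M (G.max'_mem hGne)
      have h2 : ∑ k ∈ Finset.Icc K M, (b k - b (k+1)) = b K - b (M+1) := by
        rw [← Finset.Ico_add_one_right_eq_Icc, Finset.sum_Ico_eq_sum_range]
        have h3 := Finset.sum_range_sub' (fun i => b (K + i)) (M + 1 - K)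
        simp only [show ∀ i, K + (i+1) = K + i + 1 from fun i => by omega] at h3
        rw [show K + (M + 1 - K) = M + 1 from by omega] at h3
        simpa using h3
      calc ∑ k ∈ G, (b k - b (k+1)) ≤ b K - b (M+1) := h1.trans_eq h2
        _ ≤ b K := by linarith [hbnn (M+1)]
  calc ∑ k ∈ G, ((1:ℝ) + k) ^ (-(t+1)) ≤ ∑ k ∈ G, (b k - b (k+1)) / t :=
        Finset.sum_le_sum hstep
    _ = (∑ k ∈ G, (b k - b (k+1))) / t := by rw [Finset.sum_div]
    _ ≤ (b K) / t := by gcongr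

lemma aux_img {t : ℝ} (ht : 0 < t) (F : Finset ℕ) (f : ℕ → ℝ) (d : ℕ → ℕ) (K : ℕ)
    (hK : 1 ≤ K) (hinj : ∀ a ∈ F, ∀ b ∈ F, d a = d b → a = b)
    (hKd : ∀ a ∈ F, K ≤ d a)
    (hfd : ∀ a ∈ F, f a = (1 + (d a : ℝ)) ^ (-(t+1))) :
    ∑ a ∈ F, f a ≤ (K:ℝ) ^ (-t) / t := by
  have h1 : ∑ a ∈ F, f a = ∑ k ∈ F.image d, ((1:ℝ) + k) ^ (-(t+1)) := by
    rw [Finset.sum_image hinj]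
    exact Finset.sum_congr rfl hfd
  rw [h1]
  exact aux_tail ht K hK _ (by
    intro k hk
    obtain ⟨a, ha, rfl⟩ := Finset.mem_image.mp hk
    exact hKd a ha)

lemma aux_line {t : ℝ} (ht : 0 < t) (l : ℕ) (hl : 1 ≤ l) (G : Finset ℕ)
    (hG : ∀ a ∈ G, 1 ≤ a) :
    ∑ a ∈ G, (1 + |(a:ℝ) - l|) ^ (-(t+1)) ≤ 1 + 2/t := by
  have hfnn : ∀ a : ℕ, 0 ≤ (1 + |(a:ℝ) - l|) ^ (-(t+1)) :=
    fun a => Real.rpow_nonneg (by positivity) _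
  have h1 : ∑ a ∈ G, (1 + |(a:ℝ) - l|) ^ (-(t+1))
      = ∑ a ∈ G.filter (fun x => x < l), (1 + |(a:ℝ) - l|) ^ (-(t+1))
        + (∑ a ∈ (G.filter (fun x => ¬ x < l)).filter (fun x => x = l),
            (1 + |(a:ℝ) - l|) ^ (-(t+1))
          + ∑ a ∈ (G.filter (fun x => ¬ x < l)).filter (fun x => ¬ x = l),
            (1 + |(a:ℝ) - l|) ^ (-(t+1))) := by
    rw [Finset.sum_filter_add_sum_filter_not, Finset.sum_filter_add_sum_filter_not]
  have hA : ∑ a ∈ G.filter (fun x => x < l), (1 + |(a:ℝ) - l|) ^ (-(t+1)) ≤ 1/t := by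
    have := aux_img ht (G.filter (fun x => x < l)) (fun a : ℕ => (1 + |(a:ℝ) - l|) ^ (-(t+1))) (fun a => l - a) 1 le_rfl
      (by intro a ha b hb hab
          have h1 := (Finset.mem_filter.mp ha).2; have h2 := (Finset.mem_filter.mp hb).2
          omega)
      (by intro a ha; have := (Finset.mem_filter.mp ha).2; omega)
      (by intro a ha
          have hal : a < l := (Finset.mem_filter.mp ha).2
          have hc : (a:ℝ) ≤ (l:ℝ) := by exact_mod_cast hal.le
          rw [abs_of_nonpos (by linarith)]
          push_cast [Nat.cast_sub hal.le]; ring_nf)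
    simpa using this
  have hB : ∑ a ∈ (G.filter (fun x => ¬ x < l)).filter (fun x => x = l),
      (1 + |(a:ℝ) - l|) ^ (-(t+1)) ≤ 1 := by
    have hsub : (G.filter (fun x => ¬ x < l)).filter (fun x => x = l) ⊆ {l} := by
      intro a ha
      simp only [Finset.mem_filter] at ha
      simp [ha.2]
    calc _ ≤ ∑ a ∈ ({l} : Finset ℕ), (1 + |(a:ℝ) - l|) ^ (-(t+1)) :=
          Finset.sum_le_sum_of_subset_of_nonneg hsub (fun a _ _ => hfnn a)
      _ = 1 := by simp
  have hC : ∑ a ∈ (G.filter (fun x => ¬ x < l)).filter (fun x => ¬ x = l),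
      (1 + |(a:ℝ) - l|) ^ (-(t+1)) ≤ 1/t := by
    have hmem : ∀ a ∈ (G.filter (fun x => ¬ x < l)).filter (fun x => ¬ x = l), l < a := by
      intro a ha; simp only [Finset.mem_filter] at ha; omega
    have := aux_img ht ((G.filter (fun x => ¬ x < l)).filter (fun x => ¬ x = l)) (fun a : ℕ => (1 + |(a:ℝ) - l|) ^ (-(t+1)))
      (fun a => a - l) 1 le_rfl
      (by intro a ha b hb hab; have := hmem a ha; have := hmem b hb; omega)
      (by intro a ha; have := hmem a ha; omega)
      (by intro a ha
          have hal : l < a := hmem a ha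
          have hc : (l:ℝ) ≤ (a:ℝ) := by exact_mod_cast hal.le
          rw [abs_of_nonneg (by linarith)]
          push_cast [Nat.cast_sub hal.le]; ring_nf)
    simpa using this
  have h2 : (2:ℝ)/t = 1/t + 1/t := by ring
  rw [h1, h2]; linarith

lemma aux_tail2 {t : ℝ} (ht : 0 < t) (l nn mm : ℕ) (hl : 1 ≤ l) (hln : l ≤ nn)
    (hnm : nn < mm) (G : Finset ℕ) (hG : ∀ a ∈ G, mm < a) :
    ∑ a ∈ G, (1 + |(a:ℝ) - l|) ^ (-(t+1)) ≤ ((mm:ℝ) - nn) ^ (-t) / t := by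
  have hmem : ∀ a ∈ G, l < a := fun a ha => (hln.trans_lt hnm).trans (hG a ha)
  have h := aux_img ht G (fun a : ℕ => (1 + |(a:ℝ) - l|) ^ (-(t+1))) (fun a => a - l) (mm - nn + 1) (by omega)
    (by intro a ha b hb hab; have := hmem a ha; have := hmem b hb; omega)
    (by intro a ha; have := hG a ha; omega)
    (by intro a ha
        have hal : l < a := hmem a ha
        have hc : (l:ℝ) ≤ (a:ℝ) := by exact_mod_cast hal.le
        rw [abs_of_nonneg (by linarith)]
        push_cast [Nat.cast_sub hal.le]; ring_nf)
  refine h.trans ?_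
  have h0 : (0:ℝ) < (mm:ℝ) - nn := by
    have : (nn:ℝ) < mm := by exact_mod_cast hnm
    linarith
  have h2 : ((mm:ℝ) - nn) ≤ ((mm - nn + 1 : ℕ) : ℝ) := by
    push_cast [Nat.cast_sub hnm.le]; linarith
  have := Real.rpow_le_rpow_of_nonpos h0 h2 (by linarith : -t ≤ 0)
  gcongr

lemma aux_rect (u v : ℕ → ℝ) (hu : ∀ a, 0 ≤ u a) (hv : ∀ b, 0 ≤ v b) (F : Finset (ℕ × ℕ)) :
    ∑ p ∈ F, u p.1 * v p.2 ≤ (∑ a ∈ F.image Prod.fst, u a) * (∑ b ∈ F.image Prod.snd, v b) := by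
  rw [Finset.sum_mul_sum, ← Finset.sum_product']
  apply Finset.sum_le_sum_of_subset_of_nonneg
  · intro p hp
    rw [Finset.mem_product]
    exact ⟨Finset.mem_image_of_mem _ hp, Finset.mem_image_of_mem _ hp⟩
  · intro p _ _; exact mul_nonneg (hu _) (hv _)

lemma aux_kfl {t : ℝ} (ht : 0 < t) (n m : ℕ × ℕ) (hn1 : 1 ≤ n.1) (hn2 : 1 ≤ n.2)
    (hm1 : n.1 < m.1) (hm2 : n.2 < m.2) (F : Finset (ℕ × ℕ))
    (hF : ∀ p ∈ F, 1 ≤ p.1 ∧ 1 ≤ p.2 ∧ (m.1 < p.1 ∨ m.2 < p.2)) :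
    ∑ p ∈ F, ∑ l ∈ Finset.Icc ((1,1) : ℕ×ℕ) n,
      (1 + |(p.1:ℝ) - l.1|) ^ (-(t+1)) * (1 + |(p.2:ℝ) - l.2|) ^ (-(t+1))
    ≤ (n.1 : ℝ) * n.2 * ((1 + 2/t) / t) *
        (((m.1:ℝ) - n.1) ^ (-t) + ((m.2:ℝ) - n.2) ^ (-t)) := by
  have hCpos : (0:ℝ) ≤ 1 + 2/t := by positivity
  have hE1 : (0:ℝ) ≤ ((m.1:ℝ) - n.1) ^ (-t) := Real.rpow_nonneg (by
    have : (n.1:ℝ) < m.1 := by exact_mod_cast hm1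
    linarith) _
  have hE2 : (0:ℝ) ≤ ((m.2:ℝ) - n.2) ^ (-t) := Real.rpow_nonneg (by
    have : (n.2:ℝ) < m.2 := by exact_mod_cast hm2
    linarith) _
  rw [Finset.sum_comm]
  have hperl : ∀ l ∈ Finset.Icc ((1,1) : ℕ×ℕ) n,
      ∑ p ∈ F, (1 + |(p.1:ℝ) - l.1|) ^ (-(t+1)) * (1 + |(p.2:ℝ) - l.2|) ^ (-(t+1))
      ≤ ((1 + 2/t) / t) * (((m.1:ℝ) - n.1) ^ (-t) + ((m.2:ℝ) - n.2) ^ (-t)) := by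
    intro l hl
    rw [Finset.mem_Icc] at hl
    obtain ⟨⟨hl1, hl2⟩, ⟨hln1, hln2⟩⟩ : ((1:ℕ) ≤ l.1 ∧ (1:ℕ) ≤ l.2) ∧ (l.1 ≤ n.1 ∧ l.2 ≤ n.2) :=
      ⟨hl.1, hl.2⟩
    set u : ℕ → ℝ := fun a => (1 + |(a:ℝ) - l.1|) ^ (-(t+1)) with hu
    set v : ℕ → ℝ := fun b => (1 + |(b:ℝ) - l.2|) ^ (-(t+1)) with hv
    have hunn : ∀ a, 0 ≤ u a := fun a => Real.rpow_nonneg (by positivity) _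
    have hvnn : ∀ b, 0 ≤ v b := fun b => Real.rpow_nonneg (by positivity) _
    set F1 := F.filter (fun p => m.1 < p.1) with hF1
    set F2 := F.filter (fun p => ¬ m.1 < p.1) with hF2
    have hsplit : ∑ p ∈ F, u p.1 * v p.2 = ∑ p ∈ F1, u p.1 * v p.2 + ∑ p ∈ F2, u p.1 * v p.2 :=
      (Finset.sum_filter_add_sum_filter_not F _ _).symm
    have hb1 : ∑ p ∈ F1, u p.1 * v p.2
        ≤ (((m.1:ℝ) - n.1) ^ (-t) / t) * (1 + 2/t) := by
      refine (aux_rect u v hunn hvnn F1).trans ?_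
      apply mul_le_mul
      · apply aux_tail2 ht l.1 n.1 m.1 hl1 hln1 hm1
        intro a ha
        obtain ⟨p, hp, rfl⟩ := Finset.mem_image.mp ha
        exact (Finset.mem_filter.mp hp).2
      · apply aux_line ht l.2 hl2
        intro b hb
        obtain ⟨p, hp, rfl⟩ := Finset.mem_image.mp hb
        exact (hF p (Finset.mem_filter.mp hp).1).2.1
      · exact Finset.sum_nonneg (fun b _ => hvnn b)
      · positivity
    have hb2 : ∑ p ∈ F2, u p.1 * v p.2
        ≤ (1 + 2/t) * (((m.2:ℝ) - n.2) ^ (-t) / t) := by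
      refine (aux_rect u v hunn hvnn F2).trans ?_
      apply mul_le_mul
      · apply aux_line ht l.1 hl1
        intro a ha
        obtain ⟨p, hp, rfl⟩ := Finset.mem_image.mp ha
        exact (hF p (Finset.mem_filter.mp hp).1).1
      · apply aux_tail2 ht l.2 n.2 m.2 hl2 hln2 hm2
        intro b hb
        obtain ⟨p, hp, rfl⟩ := Finset.mem_image.mp hb
        have hp' := Finset.mem_filter.mp hp
        have := hF p hp'.1
        have := hp'.2
        omega
      · exact Finset.sum_nonneg (fun b _ => hvnn b)
      · positivity
    calc ∑ p ∈ F, u p.1 * v p.2 ≤ _ + _ := hsplit.le.trans (add_le_add hb1 hb2)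
      _ = ((1 + 2/t) / t) * (((m.1:ℝ) - n.1) ^ (-t) + ((m.2:ℝ) - n.2) ^ (-t)) := by
        ring
  calc ∑ l ∈ Finset.Icc ((1,1) : ℕ×ℕ) n, ∑ p ∈ F,
        (1 + |(p.1:ℝ) - l.1|) ^ (-(t+1)) * (1 + |(p.2:ℝ) - l.2|) ^ (-(t+1))
      ≤ ∑ _l ∈ Finset.Icc ((1,1) : ℕ×ℕ) n,
        ((1 + 2/t) / t) * (((m.1:ℝ) - n.1) ^ (-t) + ((m.2:ℝ) - n.2) ^ (-t)) :=
        Finset.sum_le_sum hperl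
    _ = ((Finset.Icc ((1,1) : ℕ×ℕ) n).card : ℝ) *
        (((1 + 2/t) / t) * (((m.1:ℝ) - n.1) ^ (-t) + ((m.2:ℝ) - n.2) ^ (-t))) := by
        rw [Finset.sum_const, nsmul_eq_mul]
    _ = (n.1 : ℝ) * n.2 * ((1 + 2/t) / t) *
        (((m.1:ℝ) - n.1) ^ (-t) + ((m.2:ℝ) - n.2) ^ (-t)) := by
        have hcard : (Finset.Icc ((1,1) : ℕ×ℕ) n).card = n.1 * n.2 := by
          rw [Finset.card_Icc_prod, Nat.card_Icc, Nat.card_Icc]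
          simp
        rw [hcard]; push_cast; ring


lemma span_rep {H : Type*} [NormedAddCommGroup H] [InnerProductSpace ℂ H]
    (φ : ℕ × ℕ → H) (n : ℕ × ℕ) (g : H)
    (hg : g ∈ Submodule.span ℂ (φ '' Set.Icc ((1,1) : ℕ × ℕ) n)) :
    ∃ a : ℕ × ℕ → ℂ, g = ∑ l ∈ Finset.Icc ((1,1) : ℕ × ℕ) n, a l • φ l := by
  induction hg using Submodule.span_induction with
  | mem x hx =>
      obtain ⟨j, hj, rfl⟩ := hx
      refine ⟨fun l => if l = j then 1 else 0, ?_⟩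
      have hjmem : j ∈ Finset.Icc ((1,1) : ℕ × ℕ) n := by
        rw [Finset.mem_Icc]; exact ⟨hj.1, hj.2⟩
      have : ∀ l ∈ Finset.Icc ((1,1) : ℕ × ℕ) n,
          (if l = j then (1:ℂ) else 0) • φ l = if l = j then φ l else 0 := by
        intro l _; split <;> simp
      rw [Finset.sum_congr rfl this, Finset.sum_ite_eq' _ j φ, if_pos hjmem]
  | zero => exact ⟨0, by simp⟩
  | add x y hx hy ihx ihy =>
      obtain ⟨a, rfl⟩ := ihx
      obtain ⟨b, rfl⟩ := ihy
      exact ⟨a + b, by rw [← Finset.sum_add_distrib]; simp [add_smul]⟩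
  | smul c x hx ih =>
      obtain ⟨a, rfl⟩ := ih
      exact ⟨c • a, by rw [Finset.smul_sum]; simp [smul_smul]⟩


set_option maxHeartbeats 1000000 in
theorem stmt15 {H : Type*} [NormedAddCommGroup H] [InnerProductSpace ℂ H]
    (s A B A' B' γ₁ lam : ℝ) (hs : 1/2 < s)
    (hA : 0 < A) (hB : 0 < B) (hA' : 0 < A') (hB' : 0 < B') (hγ₁ : 0 < γ₁) (hlam : 0 < lam)
    (ψ φ : ℕ × ℕ → H)
    (hframeψ : ∀ g : H,
      A * ‖g‖^2 ≤ ∑' p : Pos2, ‖⟪g, ψ p.1⟫_ℂ‖^2 ∧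
      ∑' p : Pos2, ‖⟪g, ψ p.1⟫_ℂ‖^2 ≤ B * ‖g‖^2)
    (hframeφ : ∀ g : H,
      A' * ‖g‖^2 ≤ ∑' p : Pos2, ‖⟪g, φ p.1⟫_ℂ‖^2 ∧
      ∑' p : Pos2, ‖⟪g, φ p.1⟫_ℂ‖^2 ≤ B' * ‖g‖^2)
    (hcross : ∀ j l : ℕ × ℕ, 1 ≤ j.1 → 1 ≤ j.2 → 1 ≤ l.1 → 1 ≤ l.2 →
      ‖⟪ψ j, φ l⟫_ℂ‖ ≤ γ₁ * (1 + |(j.1 : ℝ) - l.1|) ^ (-s) * (1 + |(j.2 : ℝ) - l.2|) ^ (-s))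
    (n m : ℕ × ℕ) (hn1 : 1 ≤ n.1) (hn2 : 1 ≤ n.2) (hm1 : n.1 < m.1) (hm2 : n.2 < m.2)
    -- lam is (a lower bound for) the smallest eigenvalue of the Gram matrix Φ_n:
    (hgram : ∀ a : ℕ × ℕ → ℂ,
      lam * ∑ l ∈ Finset.Icc ((1, 1) : ℕ × ℕ) n, ‖a l‖^2 ≤
        ‖∑ l ∈ Finset.Icc ((1, 1) : ℕ × ℕ) n, a l • φ l‖^2)
    -- the full frame operator S of {ψ_j}:
    (S : H →L[ℂ] H)
    (hS : ∀ f : H, HasSum (fun p : Pos2 => ⟪f, ψ p.1⟫_ℂ • ψ p.1) (S f))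
    -- the orthogonal projection Q_n onto G_n = span{φ_j : 1 ≤ j ≤ n}:
    (Q : H →L[ℂ] H)
    (hQmem : ∀ x : H, Q x ∈ Submodule.span ℂ (φ '' Set.Icc ((1, 1) : ℕ × ℕ) n))
    (hQorth : ∀ x y : H,
      y ∈ Submodule.span ℂ (φ '' Set.Icc ((1, 1) : ℕ × ℕ) n) → ⟪x - Q x, y⟫_ℂ = 0) :
    -- ‖S − W_n‖_{G_n} ≤ B_{m,n}, via the quadratic-form expression of the norm:
    ∀ g ∈ Submodule.span ℂ (φ '' Set.Icc ((1, 1) : ℕ × ℕ) n),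
      ‖⟪S g - Q (∑ j ∈ Finset.Icc ((1, 1) : ℕ × ℕ) m, ⟪g, ψ j⟫_ℂ • ψ j), g⟫_ℂ‖
        ≤ (4 * s * γ₁^2 / ((2 * s - 1)^2 * lam)) * (n.1 : ℝ) * (n.2 : ℝ) *
            (((m.1 : ℝ) - n.1) ^ (-(2 * s - 1)) + ((m.2 : ℝ) - n.2) ^ (-(2 * s - 1))) *
          ‖g‖^2 := by
  intro g hg
  obtain ⟨a, hga⟩ := span_rep φ n g hg
  have ht : 0 < 2*s - 1 := by linarith
  set t := 2*s - 1 with htdef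
  -- coefficient bound
  have hKsq : ∑ l ∈ Finset.Icc ((1,1) : ℕ×ℕ) n, ‖a l‖^2 ≤ ‖g‖^2 / lam := by
    rw [le_div_iff₀ hlam]
    have h := hgram a
    rw [← hga] at h
    linarith
  have hKsq0 : (0:ℝ) ≤ ∑ l ∈ Finset.Icc ((1,1) : ℕ×ℕ) n, ‖a l‖^2 :=
    Finset.sum_nonneg (fun l _ => by positivity)
  set Ksq := ∑ l ∈ Finset.Icc ((1,1) : ℕ×ℕ) n, ‖a l‖^2 with hKsqdef
  set c : Pos2 → ℂ := fun p => ⟪g, ψ p.1⟫_ℂ with hc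
  have hsum : HasSum (fun p : Pos2 => c p * c p) ⟪g, S g⟫_ℂ := by
    have h := (hS g).mapL (innerSL ℂ g)
    simpa [inner_smul_right, hc] using h
  set sFin : Finset Pos2 := (Finset.Icc ((1,1) : ℕ×ℕ) m).subtype (fun p => 1 ≤ p.1 ∧ 1 ≤ p.2)
    with hsFin
  set Smg := ∑ j ∈ Finset.Icc ((1,1) : ℕ×ℕ) m, ⟪g, ψ j⟫_ℂ • ψ j with hSmg
  have hpartial : ∑ p ∈ sFin, c p * c p = ⟪g, Smg⟫_ℂ := by
    have h1 : ∑ p ∈ sFin, c p * c p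
        = ∑ x ∈ (Finset.Icc ((1,1) : ℕ×ℕ) m).filter (fun p => 1 ≤ p.1 ∧ 1 ≤ p.2),
            ⟪g, ψ x⟫_ℂ * ⟪g, ψ x⟫_ℂ :=
      Finset.sum_subtype_eq_sum_filter (fun j : ℕ×ℕ => ⟪g, ψ j⟫_ℂ * ⟪g, ψ j⟫_ℂ)
    rw [h1, Finset.filter_true_of_mem (fun j hj => by
      rw [Finset.mem_Icc] at hj
      exact ⟨hj.1.1, hj.1.2⟩), hSmg, inner_sum]
    simp only [inner_smul_right]
  have htail : HasSum (fun q : {x : Pos2 // x ∉ sFin} => c q.1 * c q.1)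
      (⟪g, S g⟫_ℂ - ⟪g, Smg⟫_ℂ) := by
    apply (Finset.hasSum_compl_iff (f := fun p : Pos2 => c p * c p) sFin).mpr
    rw [hpartial, sub_add_cancel]
    exact hsum
  -- reduce the target inner product
  have hQeq : ⟪Q Smg, g⟫_ℂ = ⟪Smg, g⟫_ℂ := by
    have h := hQorth Smg g hg
    rw [inner_sub_left, sub_eq_zero] at h
    exact h.symm
  have hval : ‖⟪S g - Q Smg, g⟫_ℂ‖ = ‖∑' q : {x : Pos2 // x ∉ sFin}, c q.1 * c q.1‖ := by
    rw [htail.tsum_eq, inner_sub_left, hQeq, ← inner_sub_left, norm_inner_symm,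
      inner_sub_right]
  -- pointwise bound
  set w : ℕ×ℕ → ℝ := fun p => ∑ l ∈ Finset.Icc ((1,1) : ℕ×ℕ) n,
      (1 + |(p.1:ℝ) - l.1|) ^ (-(t+1)) * (1 + |(p.2:ℝ) - l.2|) ^ (-(t+1)) with hw
  have hw0 : ∀ p, 0 ≤ w p := fun p => Finset.sum_nonneg (fun l _ =>
    mul_nonneg (Real.rpow_nonneg (by positivity) _) (Real.rpow_nonneg (by positivity) _))
  have hpt : ∀ p : Pos2, ‖c p‖^2 ≤ Ksq * (γ₁^2 * w p.1) := by
    intro p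
    have h1 : c p = ∑ l ∈ Finset.Icc ((1,1) : ℕ×ℕ) n,
        (starRingEnd ℂ) (a l) * ⟪φ l, ψ p.1⟫_ℂ := by
      rw [hc]
      show ⟪g, ψ p.1⟫_ℂ = _
      rw [hga, sum_inner]
      exact Finset.sum_congr rfl (fun l _ => inner_smul_left _ _ _)
    have h2 : ‖c p‖ ≤ ∑ l ∈ Finset.Icc ((1,1) : ℕ×ℕ) n,
        ‖a l‖ * (γ₁ * (1 + |(p.1.1:ℝ) - l.1|) ^ (-s) * (1 + |(p.1.2:ℝ) - l.2|) ^ (-s)) := by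
      rw [h1]
      refine (norm_sum_le _ _).trans (Finset.sum_le_sum ?_)
      intro l hl
      rw [Finset.mem_Icc] at hl
      rw [norm_mul, RCLike.norm_conj]
      apply mul_le_mul_of_nonneg_left ?_ (norm_nonneg _)
      rw [norm_inner_symm]
      exact hcross p.1 l p.2.1 p.2.2 hl.1.1 hl.1.2
    have h3 : ‖c p‖^2 ≤ (∑ l ∈ Finset.Icc ((1,1) : ℕ×ℕ) n,
        ‖a l‖ * (γ₁ * (1 + |(p.1.1:ℝ) - l.1|) ^ (-s) * (1 + |(p.1.2:ℝ) - l.2|) ^ (-s)))^2 :=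
      pow_le_pow_left₀ (norm_nonneg _) h2 2
    refine h3.trans ?_
    refine (Finset.sum_mul_sq_le_sq_mul_sq _ _ _).trans ?_
    rw [hKsqdef]
    apply mul_le_mul_of_nonneg_left ?_ hKsq0
    rw [hw, Finset.mul_sum]
    apply Finset.sum_le_sum
    intro l hl
    have hx1 : (0:ℝ) < 1 + |(p.1.1:ℝ) - l.1| := by positivity
    have hx2 : (0:ℝ) < 1 + |(p.1.2:ℝ) - l.2| := by positivity
    have e1 : ((1 + |(p.1.1:ℝ) - l.1|) ^ (-s))^2 = (1 + |(p.1.1:ℝ) - l.1|) ^ (-(t+1)) := by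
      rw [← Real.rpow_natCast ((1 + |(p.1.1:ℝ) - l.1|) ^ (-s)) 2, ← Real.rpow_mul hx1.le]
      congr 1
      rw [htdef]; push_cast; ring
    have e2 : ((1 + |(p.1.2:ℝ) - l.2|) ^ (-s))^2 = (1 + |(p.1.2:ℝ) - l.2|) ^ (-(t+1)) := by
      rw [← Real.rpow_natCast ((1 + |(p.1.2:ℝ) - l.2|) ^ (-s)) 2, ← Real.rpow_mul hx2.le]
      congr 1
      rw [htdef]; push_cast; ring
    exact le_of_eq (by rw [← e1, ← e2]; ring)
  -- the dominating function on the tail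
  set d : {x : Pos2 // x ∉ sFin} → ℝ := fun q => Ksq * (γ₁^2 * w q.1.1) with hd
  have hd0 : ∀ q, 0 ≤ d q := fun q =>
    mul_nonneg hKsq0 (mul_nonneg (by positivity) (hw0 _))
  have hdle : ∀ q : {x : Pos2 // x ∉ sFin}, ‖c q.1 * c q.1‖ ≤ d q := by
    intro q
    rw [norm_mul, ← sq]
    exact hpt q.1
  set E : ℝ := ((m.1:ℝ) - n.1) ^ (-t) + ((m.2:ℝ) - n.2) ^ (-t) with hE
  set Cw : ℝ := (n.1 : ℝ) * n.2 * ((1 + 2/t) / t) * E with hCw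
  have hdF : ∀ F : Finset {x : Pos2 // x ∉ sFin}, ∑ q ∈ F, d q ≤ Ksq * (γ₁^2 * Cw) := by
    intro F
    have hinj : ∀ x ∈ F, ∀ y ∈ F, x.1.1 = y.1.1 → x = y := by
      intro x _ y _ hxy
      exact Subtype.ext (Subtype.ext hxy)
    have himg : ∑ q ∈ F, w q.1.1 = ∑ p ∈ F.image (fun q => q.1.1), w p :=
      (Finset.sum_image hinj).symm
    have hFcond : ∀ p ∈ F.image (fun q => q.1.1), 1 ≤ p.1 ∧ 1 ≤ p.2 ∧
        (m.1 < p.1 ∨ m.2 < p.2) := by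
      intro p hp
      obtain ⟨q, hq, rfl⟩ := Finset.mem_image.mp hp
      refine ⟨q.1.2.1, q.1.2.2, ?_⟩
      have hnot' : q.1.1 ∉ Finset.Icc ((1,1) : ℕ×ℕ) m := by
        intro hmem
        exact q.2 (Finset.mem_subtype.mpr hmem)
      have h1 := q.1.2.1
      have h2 := q.1.2.2
      by_contra hcon
      push_neg at hcon
      exact hnot' (Finset.mem_Icc.mpr
        ⟨Prod.le_def.mpr ⟨h1, h2⟩, Prod.le_def.mpr ⟨hcon.1, hcon.2⟩⟩)
    have hkfl := aux_kfl ht n m hn1 hn2 hm1 hm2 (F.image (fun q => q.1.1)) hFcond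
    calc ∑ q ∈ F, d q = Ksq * γ₁^2 * ∑ q ∈ F, w q.1.1 := by
          rw [Finset.mul_sum]; exact Finset.sum_congr rfl (fun q _ => by rw [hd]; ring)
      _ ≤ Ksq * γ₁^2 * Cw := by
          apply mul_le_mul_of_nonneg_left ?_ (by positivity)
          rw [himg, hCw, hE]
          exact hkfl
      _ = Ksq * (γ₁^2 * Cw) := by ring
  have hdsummable : Summable d := summable_of_sum_le (fun q => hd0 q) hdF
  have hnsummable : Summable (fun q : {x : Pos2 // x ∉ sFin} => ‖c q.1 * c q.1‖) :=
    Summable.of_nonneg_of_le (fun q => norm_nonneg _) hdle hdsummable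
  have hmain : ‖∑' q : {x : Pos2 // x ∉ sFin}, c q.1 * c q.1‖ ≤ Ksq * (γ₁^2 * Cw) :=
    (norm_tsum_le_tsum_norm hnsummable).trans
      ((Summable.tsum_le_tsum hdle hnsummable hdsummable).trans (Summable.tsum_le_of_sum_le hdsummable hdF))
  -- final arithmetic
  rw [hval]
  refine hmain.trans ?_
  have hE0 : 0 ≤ E := by
    rw [hE]
    have h1 : (0:ℝ) ≤ ((m.1:ℝ) - n.1) ^ (-t) := Real.rpow_nonneg (by
      have : (n.1:ℝ) < m.1 := by exact_mod_cast hm1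
      linarith) _
    have h2 : (0:ℝ) ≤ ((m.2:ℝ) - n.2) ^ (-t) := Real.rpow_nonneg (by
      have : (n.2:ℝ) < m.2 := by exact_mod_cast hm2
      linarith) _
    linarith
  have hCw0 : 0 ≤ Cw := by
    rw [hCw]
    have hfr : (0:ℝ) ≤ (1 + 2/t)/t := by positivity
    positivity
  have h4s : 4*s = 2*t + 2 := by rw [htdef]; ring
  have hconst : (1 + 2/t)/t ≤ (2*t + 2)/t^2 := by
    have h1 : 1 + 2/t = (t+2)/t := by
      rw [add_div, div_self (ne_of_gt ht)]
    have h : (1 + 2/t)/t = (t+2)/t^2 := by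
      rw [h1, div_div, pow_two]
    rw [h, div_le_div_iff_of_pos_right (by positivity)]
    linarith
  have step2 : Cw ≤ (n.1:ℝ) * n.2 * ((2*t + 2)/t^2) * E := by
    rw [hCw]
    exact mul_le_mul_of_nonneg_right
      (mul_le_mul_of_nonneg_left hconst (by positivity)) hE0
  calc Ksq * (γ₁^2 * Cw)
      ≤ (‖g‖^2/lam) * (γ₁^2 * ((n.1:ℝ) * n.2 * ((2*t + 2)/t^2) * E)) := by
        apply mul_le_mul hKsq (mul_le_mul_of_nonneg_left step2 (by positivity))
          (mul_nonneg (by positivity) hCw0) (by positivity)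
    _ = 4 * s * γ₁ ^ 2 / (t ^ 2 * lam) * ↑n.1 * ↑n.2 * E * ‖g‖ ^ 2 := by
        rw [h4s]
        field_simp
end
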